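/- arXiv:2005.02738 — 2 statements merged into one kernel-verified Lean document; each statement's English description precedes it below -/
import Mathlib

section
/- In a flow network with integer capacities and integer (possibly negative on residual edges) costs, among all maximum flows there exists an integer-valued maximum flow of minimum cost; i.e., the minimum of the linear cost function over the set of maximum flows is attained at an integer point. -/
open Finset

/-- A feasible flow on a finite directed graph with source `s`, sink `t`, and
natural-number capacities `c`. -/
def FlowFeasible {V : Type*} [Fintype V] (s t : V) (c : V → V → ℕ)
    (f : V → V → ℝ) : Prop :=
  (∀ u v, 0 ≤ f u v ∧ f u v ≤ (c u v : ℝ)) ∧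
  ∀ v, v ≠ s → v ≠ t → (∑ u, f u v) = (∑ w, f v w)

/-- The value of a flow: net flow out of the source. -/
def flowValue {V : Type*} [Fintype V] (s : V) (f : V → V → ℝ) : ℝ :=
  (∑ w, f s w) - (∑ u, f u s)

/-- The cost of a flow with respect to integer edge costs `w`. -/
def flowCost {V : Type*} [Fintype V] (w : V → V → ℤ) (f : V → V → ℝ) : ℝ :=
  ∑ u, ∑ v, (w u v : ℝ) * f u v

namespace MCMF
attribute [local instance] Classical.propDecidable
set_option maxHeartbeats 1000000
set_option linter.unusedSectionVars false
set_option linter.unreachableTactic false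
set_option linter.unusedTactic false
variable {V : Type*} [Fintype V]

def IsInt (x : ℝ) : Prop := ∃ z : ℤ, x = z

def divg (d : V → V → ℝ) (v : V) : ℝ := (∑ u, d u v) - (∑ x, d v x)

noncomputable def stepFn (a b : V) (e : V × V) : V → V → ℝ :=
  fun p q => if (p, q) = e then (if e = (a, b) then 1 else -1) else 0

lemma divg_add (d1 d2 : V → V → ℝ) (z : V) :
    divg (fun p q => d1 p q + d2 p q) z = divg d1 z + divg d2 z := by
  simp [divg, Finset.sum_add_distrib]; ring

lemma divg_stepFn (a b : V) (hab : a ≠ b) (e : V × V) (he : e = (a, b) ∨ e = (b, a)) (y : V) :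
    divg (stepFn a b e) y = (if y = b then 1 else 0) - (if y = a then 1 else 0) := by
  have hba : ((b, a) : V × V) ≠ (a, b) := by
    intro h; exact hab (congrArg Prod.snd h)
  rcases he with rfl | rfl
  · simp only [divg, stepFn, Prod.mk.injEq, if_pos rfl]
    by_cases h1 : y = a <;> by_cases h2 : y = b <;>
      simp_all [Finset.sum_ite_eq, Finset.sum_ite_eq']
  · simp only [divg, stepFn, Prod.mk.injEq, if_neg hba]
    by_cases h1 : y = a <;> by_cases h2 : y = b <;>
      simp_all [Finset.sum_ite_eq, Finset.sum_ite_eq']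

lemma stepFn_cases (a b : V) (e : V × V) (p q : V) :
    stepFn a b e p q = -1 ∨ stepFn a b e p q = 0 ∨ stepFn a b e p q = 1 := by
  unfold stepFn; split_ifs <;> simp

lemma stepFn_supp (a b : V) (e : V × V) (p q : V) (h : stepFn a b e p q ≠ 0) :
    (p, q) = e := by
  by_contra hc; exact h (by simp [stepFn, hc])

lemma stepFn_self (a b : V) (e : V × V) :
    stepFn a b e e.1 e.2 = -1 ∨ stepFn a b e e.1 e.2 = 1 := by
  unfold stepFn; split_ifs <;> simp_all

lemma addStep (used : Finset (V × V)) (d0 : V → V → ℝ) (v x y : V) (e' : V × V)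
    (hvx : v ≠ x) (he' : e' = (v, x) ∨ e' = (x, v)) (hnu : e' ∉ used)
    (hsupp : ∀ p q, d0 p q ≠ 0 → (p, q) ∈ used)
    (htri : ∀ p q, d0 p q = -1 ∨ d0 p q = 0 ∨ d0 p q = 1)
    (hdiv : ∀ z, divg d0 z = (if z = v then 1 else 0) - (if z = y then 1 else 0)) :
    (∀ p q, (d0 p q + stepFn v x e' p q) ≠ 0 → (p, q) ∈ insert e' used) ∧
    (∀ p q, (d0 p q + stepFn v x e' p q) = -1 ∨ (d0 p q + stepFn v x e' p q) = 0 ∨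
      (d0 p q + stepFn v x e' p q) = 1) ∧
    (d0 e'.1 e'.2 + stepFn v x e' e'.1 e'.2 ≠ 0) ∧
    (∀ z, divg (fun p q => d0 p q + stepFn v x e' p q) z
        = (if z = x then 1 else 0) - (if z = y then 1 else 0)) := by
  have hd0e : d0 e'.1 e'.2 = 0 := by
    by_contra hc
    exact hnu (by simpa using hsupp e'.1 e'.2 hc)
  refine ⟨?_, ?_, ?_, ?_⟩
  · intro p q h
    by_cases hpq : (p, q) = e'
    · exact hpq ▸ Finset.mem_insert_self _ _
    · have hst : stepFn v x e' p q = 0 := by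
        by_contra hc; exact hpq (stepFn_supp _ _ _ _ _ hc)
      rw [hst, add_zero] at h
      exact Finset.mem_insert_of_mem (hsupp p q h)
  · intro p q
    by_cases hpq : (p, q) = e'
    · have : d0 p q = 0 := by
        rw [show p = e'.1 from congrArg Prod.fst hpq, show q = e'.2 from congrArg Prod.snd hpq]
        exact hd0e
      rw [this, zero_add]
      exact stepFn_cases v x e' p q
    · have hst : stepFn v x e' p q = 0 := by
        by_contra hc; exact hpq (stepFn_supp _ _ _ _ _ hc)
      rw [hst, add_zero]
      exact htri p q
  · rw [hd0e, zero_add]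
    rcases stepFn_self v x e' with h | h <;> rw [h] <;> norm_num
  · intro z
    rw [divg_add, hdiv z, divg_stepFn v x hvx e' he' z]
    ring

lemma walk_core (s t : V) (A : Finset (V × V))
    (noloop : ∀ v : V, (v, v) ∉ A)
    (hub : ∀ v, v ≠ s → v ≠ t → ∀ e ∈ A, (e.1 = v ∨ e.2 = v) →
      ∃ e' ∈ A, (e'.1 = v ∨ e'.2 = v) ∧ e' ≠ e)
    (a : V) :
    ∀ (n : ℕ) (visited : Finset V) (v : V) (elast : V × V) (used : Finset (V × V))
      (D : V → V → V → ℝ),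
      Fintype.card V ≤ visited.card + n →
      a ∈ visited → v ∈ visited → v ≠ s → v ≠ t →
      elast ∈ A → (elast.1 = v ∨ elast.2 = v) →
      used ⊆ A →
      (∀ p ∈ used, p.1 ∈ visited ∧ p.2 ∈ visited) →
      (∀ p ∈ used, (p.1 = v ∨ p.2 = v) → p = elast) →
      (∀ y ∈ visited,
        (∀ p q, D y p q ≠ 0 → (p, q) ∈ used) ∧
        (∀ p q, D y p q = -1 ∨ D y p q = 0 ∨ D y p q = 1) ∧
        (∀ z, divg (D y) z = (if z = v then 1 else 0) - (if z = y then 1 else 0))) →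
      ∃ d : V → V → ℝ,
        (∀ p q, d p q ≠ 0 → (p, q) ∈ A) ∧
        (∀ p q, d p q = -1 ∨ d p q = 0 ∨ d p q = 1) ∧
        (∃ p q, d p q ≠ 0) ∧
        ((∀ z, divg d z = 0) ∨
          (∃ b, (b = s ∨ b = t) ∧ b ∉ visited ∧ (∃ p ∈ A, p.1 = b ∨ p.2 = b) ∧
            (∀ z, divg d z = (if z = b then 1 else 0) - (if z = a then 1 else 0)))) := by
  intro n
  induction n using Nat.strong_induction_on with
  | _ n IH =>
  intro visited v elast used D hcard ha hv hvs hvt helastA helastinc husedA hU1 hU2 hD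
  obtain ⟨e', he'A, he'inc, he'ne⟩ := hub v hvs hvt elast helastA helastinc
  set x := if e'.1 = v then e'.2 else e'.1 with hxdef
  have hx : e' = (v, x) ∨ e' = (x, v) := by
    by_cases h1 : e'.1 = v
    · left; rw [hxdef, if_pos h1, ← h1]
    · right
      have h2 : e'.2 = v := by tauto
      rw [hxdef, if_neg h1, ← h2]
  have hvx : v ≠ x := by
    intro h
    rcases hx with he | he <;> rw [he, ← h] at he'A <;> exact noloop v he'A
  have he'x : e'.1 = x ∨ e'.2 = x := by
    rcases hx with he | he
    · right; rw [he]
    · left; rw [he]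
  have hnu : e' ∉ used := fun h => he'ne (hU2 e' h he'inc)
  by_cases hxv : x ∈ visited
  · -- close a cycle
    obtain ⟨hs1, hs2, hs3⟩ := hD x hxv
    obtain ⟨S1, S2, S3, S4⟩ := addStep used (D x) v x x e' hvx hx hnu hs1 hs2 hs3
    refine ⟨fun p q => D x p q + stepFn v x e' p q, ?_, S2, ⟨e'.1, e'.2, S3⟩, Or.inl ?_⟩
    · intro p q h
      rcases Finset.mem_insert.mp (S1 p q h) with h' | h'
      · exact h' ▸ he'A
      · exact husedA h'
    · intro z
      rw [S4 z]
      ring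
  · by_cases hxst : x = s ∨ x = t
    · -- close a path at x ∈ {s, t}
      obtain ⟨hs1, hs2, hs3⟩ := hD a ha
      obtain ⟨S1, S2, S3, S4⟩ := addStep used (D a) v x a e' hvx hx hnu hs1 hs2 hs3
      refine ⟨fun p q => D a p q + stepFn v x e' p q, ?_, S2, ⟨e'.1, e'.2, S3⟩,
        Or.inr ⟨x, hxst, hxv, ⟨e', he'A, he'x⟩, S4⟩⟩
      intro p q h
      rcases Finset.mem_insert.mp (S1 p q h) with h' | h'
      · exact h' ▸ he'A
      · exact husedA h'
    · -- extend the walk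
      push_neg at hxst
      rcases n with _ | m
      · -- impossible: visited is everything
        exfalso
        have : visited = Finset.univ :=
          Finset.eq_univ_of_card visited
            (le_antisymm (Finset.card_le_univ _) (by simpa using hcard))
        exact hxv (this ▸ Finset.mem_univ x)
      · obtain ⟨hs1, hs2, hs3⟩ := hD a ha  -- dummy to keep names
        refine IH m (Nat.lt_succ_self m) (insert x visited) x e' (insert e' used)
          (fun y p q => if y = x then 0 else D y p q + stepFn v x e' p q)
          ?_ (Finset.mem_insert_of_mem ha) (Finset.mem_insert_self x visited)
          hxst.1 hxst.2 he'A he'x ?_ ?_ ?_ ?_ |>.imp ?_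
        · rw [Finset.card_insert_of_notMem hxv]
          omega
        · intro p hp
          rcases Finset.mem_insert.mp hp with h' | h'
          · exact h' ▸ he'A
          · exact husedA h'
        · intro p hp
          rcases Finset.mem_insert.mp hp with h' | h'
          · subst h'
            rcases hx with he | he <;> rw [he] <;>
              exact ⟨by simp [Finset.mem_insert, hv, hxv] <;> tauto,
                by simp [Finset.mem_insert, hv, hxv] <;> tauto⟩
          · obtain ⟨hp1, hp2⟩ := hU1 p h'
            exact ⟨Finset.mem_insert_of_mem hp1, Finset.mem_insert_of_mem hp2⟩
        · intro p hp hpinc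
          rcases Finset.mem_insert.mp hp with h' | h'
          · exact h'
          · exfalso
            obtain ⟨hp1, hp2⟩ := hU1 p h'
            rcases hpinc with h | h
            · exact hxv (h ▸ hp1)
            · exact hxv (h ▸ hp2)
        · intro y hy
          by_cases hyx : y = x
          · subst hyx
            refine ⟨by simp, by intro p q; simp, ?_⟩
            intro z
            simp [divg]
          · have hyv : y ∈ visited := by
              rcases Finset.mem_insert.mp hy with h | h
              · exact absurd h hyx
              · exact h
            obtain ⟨t1, t2, t3⟩ := hD y hyv
            obtain ⟨S1, S2, S3, S4⟩ := addStep used (D y) v x y e' hvx hx hnu t1 t2 t3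
            refine ⟨?_, ?_, ?_⟩ <;> simp only [if_neg hyx]
            · exact S1
            · exact S2
            · exact S4
        · -- conclusion transfer: visited grew, need b ∉ visited from b ∉ insert
          rintro d ⟨c1, c2, c3, c4⟩
          refine ⟨c1, c2, c3, ?_⟩
          rcases c4 with h | ⟨b, hb1, hb2, hb3, hb4⟩
          · exact Or.inl h
          · exact Or.inr ⟨b, hb1, fun hbv => hb2 (Finset.mem_insert_of_mem hbv), hb3, hb4⟩


lemma IsInt.add {x y : ℝ} (hx : IsInt x) (hy : IsInt y) : IsInt (x + y) := by
  obtain ⟨a, rfl⟩ := hx; obtain ⟨b, rfl⟩ := hy; exact ⟨a + b, by push_cast; ring⟩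

lemma IsInt.sub {x y : ℝ} (hx : IsInt x) (hy : IsInt y) : IsInt (x - y) := by
  obtain ⟨a, rfl⟩ := hx; obtain ⟨b, rfl⟩ := hy; exact ⟨a - b, by push_cast; ring⟩

lemma IsInt.neg {x : ℝ} (hx : IsInt x) : IsInt (-x) := by
  obtain ⟨a, rfl⟩ := hx; exact ⟨-a, by push_cast; ring⟩

lemma IsInt.zero : IsInt (0 : ℝ) := ⟨0, by norm_num⟩

lemma IsInt.sum {ι : Type*} (s : Finset ι) (f : ι → ℝ) (h : ∀ i ∈ s, IsInt (f i)) :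
    IsInt (∑ i ∈ s, f i) :=
  Finset.sum_induction f IsInt (fun _ _ => IsInt.add) IsInt.zero h

lemma not_isInt_sub_left {x y : ℝ} (hx : ¬ IsInt x) (hy : IsInt y) : ¬ IsInt (x - y) :=
  fun h => hx (by simpa using h.add hy)

lemma not_isInt_sub_right {x y : ℝ} (hx : IsInt x) (hy : ¬ IsInt y) : ¬ IsInt (x - y) :=
  fun h => hy (by simpa using hx.sub h)

lemma isInt_of_notMem (f : V → V → ℝ) (A : Finset (V × V))
    (hA : ∀ p q : V, (p, q) ∈ A ↔ ¬ IsInt (f p q)) {p q : V} (h : (p, q) ∉ A) :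
    IsInt (f p q) := by
  by_contra hc; exact h ((hA p q).mpr hc)

lemma hub_of_cons (s t : V) (f : V → V → ℝ)
    (hcons : ∀ v, v ≠ s → v ≠ t → (∑ u, f u v) = (∑ x, f v x))
    (A : Finset (V × V))
    (hA : ∀ p q : V, (p, q) ∈ A ↔ ¬ IsInt (f p q))
    (noloop : ∀ v : V, (v, v) ∉ A) :
    ∀ v, v ≠ s → v ≠ t → ∀ e ∈ A, (e.1 = v ∨ e.2 = v) →
      ∃ e' ∈ A, (e'.1 = v ∨ e'.2 = v) ∧ e' ≠ e := by
  intro v hvs hvt e heA heinc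
  set I := A.filter (fun p => p.1 = v ∨ p.2 = v) with hI
  have heI : e ∈ I := Finset.mem_filter.mpr ⟨heA, heinc⟩
  by_cases hcard : 1 < I.card
  · obtain ⟨e', he'I, hne⟩ := Finset.exists_mem_ne hcard e
    obtain ⟨h1, h2⟩ := Finset.mem_filter.mp he'I
    exact ⟨e', h1, h2, hne⟩
  · exfalso
    have hsing : ∀ p ∈ I, p = e := by
      intro p hp
      by_contra hne
      exact hcard (Finset.one_lt_card.mpr ⟨p, hp, e, heI, hne⟩)
    have hloop : IsInt (f v v) := isInt_of_notMem f A hA (noloop v)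
    -- find the unique fractional neighbour u₀ of v
    obtain ⟨u₀, hu₀v, hor, hmem⟩ :
        ∃ u₀ : V, u₀ ≠ v ∧
          (((u₀, v) ∈ A ∧ (v, u₀) ∉ A) ∨ ((v, u₀) ∈ A ∧ (u₀, v) ∉ A)) ∧
          (∀ p ∈ I, p = (u₀, v) ∨ p = (v, u₀)) := by
      by_cases h1 : e.1 = v
      · refine ⟨e.2, ?_, ?_, ?_⟩
        · intro h
          apply noloop v
          have : e = (v, v) := Prod.ext h1 h
          rwa [this] at heA
        · right
          constructor
          · have : e = (v, e.2) := Prod.ext h1 rfl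
            rwa [this] at heA
          · intro hc
            have hcI : (e.2, v) ∈ I := Finset.mem_filter.mpr ⟨hc, Or.inr rfl⟩
            have := hsing _ hcI
            have h2 : e.2 = e.1 := congrArg Prod.fst this
            apply noloop v
            have : e = (v, v) := Prod.ext h1 (h2.trans h1)
            rwa [this] at heA
        · intro p hp
          right
          rw [hsing p hp]
          exact Prod.ext h1 rfl
      · have h2 : e.2 = v := by tauto
        refine ⟨e.1, h1, ?_, ?_⟩
        · left
          constructor
          · have : e = (e.1, v) := Prod.ext rfl h2
            rwa [this] at heA
          · intro hc
            have hcI : (v, e.1) ∈ I := Finset.mem_filter.mpr ⟨hc, Or.inl rfl⟩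
            have := hsing _ hcI
            exact h1 (congrArg Prod.fst this).symm
        · intro p hp
          left
          rw [hsing p hp]
          exact Prod.ext rfl h2
    have hothers : ∀ u : V, u ≠ u₀ → u ≠ v → IsInt (f u v) ∧ IsInt (f v u) := by
      intro u hu1 hu2
      constructor
      · apply isInt_of_notMem f A hA
        intro hc
        have : (u, v) ∈ I := Finset.mem_filter.mpr ⟨hc, Or.inr rfl⟩
        rcases hmem _ this with h | h
        · injection h with ha hb; exact hu1 ha
        · injection h with ha hb; exact hu2 ha
      · apply isInt_of_notMem f A hA
        intro hc
        have : (v, u) ∈ I := Finset.mem_filter.mpr ⟨hc, Or.inl rfl⟩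
        rcases hmem _ this with h | h
        · injection h with ha hb; exact hu₀v ha.symm
        · injection h with ha hb; exact hu1 hb
    have hnonint : ¬ IsInt (f u₀ v - f v u₀) := by
      rcases hor with ⟨hin, hout⟩ | ⟨hin, hout⟩
      · exact not_isInt_sub_left ((hA u₀ v).mp hin) (isInt_of_notMem f A hA hout)
      · exact not_isInt_sub_right (isInt_of_notMem f A hA hout) ((hA v u₀).mp hin)
    have h0 : (∑ u, (f u v - f v u)) = 0 := by
      rw [Finset.sum_sub_distrib, hcons v hvs hvt, sub_self]
    have herase : IsInt (∑ u ∈ Finset.univ.erase u₀, (f u v - f v u)) := by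
      apply IsInt.sum
      intro u hu
      have hu' : u ≠ u₀ := (Finset.mem_erase.mp hu).1
      by_cases huv : u = v
      · subst huv; exact hloop.sub hloop
      · exact ((hothers u hu' huv).1).sub ((hothers u hu' huv).2)
    have hsum : f u₀ v - f v u₀ + ∑ u ∈ Finset.univ.erase u₀, (f u v - f v u) = 0 := by
      rw [Finset.add_sum_erase _ (fun u => f u v - f v u) (Finset.mem_univ u₀)]
      exact h0
    have heq : f u₀ v - f v u₀ = -(∑ u ∈ Finset.univ.erase u₀, (f u v - f v u)) := by
      linarith
    exact hnonint (heq ▸ herase.neg)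

lemma divg_zero_fun (z : V) : divg (fun _ _ => (0:ℝ)) z = 0 := by simp [divg]

lemma launch (s t : V) (A : Finset (V × V))
    (noloop : ∀ v : V, (v, v) ∉ A)
    (hub : ∀ v, v ≠ s → v ≠ t → ∀ e ∈ A, (e.1 = v ∨ e.2 = v) →
      ∃ e' ∈ A, (e'.1 = v ∨ e'.2 = v) ∧ e' ≠ e)
    (a x₀ : V) (e₀ : V × V) (he₀A : e₀ ∈ A)
    (he₀ : e₀ = (a, x₀) ∨ e₀ = (x₀, a)) (hax : a ≠ x₀) (hxs : x₀ ≠ s) (hxt : x₀ ≠ t) :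
    ∃ d : V → V → ℝ,
      (∀ p q, d p q ≠ 0 → (p, q) ∈ A) ∧
      (∀ p q, d p q = -1 ∨ d p q = 0 ∨ d p q = 1) ∧
      (∃ p q, d p q ≠ 0) ∧
      ((∀ z, divg d z = 0) ∨
        (∃ b, (b = s ∨ b = t) ∧ b ≠ a ∧ b ≠ x₀ ∧ (∃ p ∈ A, p.1 = b ∨ p.2 = b) ∧
          (∀ z, divg d z = (if z = b then 1 else 0) - (if z = a then 1 else 0)))) := by
  have hmain := walk_core s t A noloop hub a (Fintype.card V) ({a, x₀} : Finset V) x₀ e₀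
    ({e₀} : Finset (V × V))
    (fun y => if y = x₀ then (fun _ _ => 0) else stepFn a x₀ e₀)
    (Nat.le_add_left _ _)
    (Finset.mem_insert_self a _)
    (Finset.mem_insert_of_mem (Finset.mem_singleton_self x₀))
    hxs hxt he₀A
    (by rcases he₀ with h | h
        · right; rw [h]
        · left; rw [h])
    (by intro p hp; rw [Finset.mem_singleton.mp hp]; exact he₀A)
    (by intro p hp
        rw [Finset.mem_singleton.mp hp]
        rcases he₀ with h | h <;> rw [h] <;> exact ⟨by simp, by simp⟩)
    (by intro p hp _; exact Finset.mem_singleton.mp hp)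
    (by intro y hy
        by_cases hyx : y = x₀
        · subst hyx
          refine ⟨by simp, by intro p q; simp, ?_⟩
          intro z
          simp [divg]
        · have hya : y = a := by
            rcases Finset.mem_insert.mp hy with h | h
            · exact h
            · exact absurd (Finset.mem_singleton.mp h) hyx
          refine ⟨?_, ?_, ?_⟩ <;> simp only [if_neg hyx]
          · intro p q h
            rw [Finset.mem_singleton]
            exact stepFn_supp _ _ _ _ _ h
          · exact stepFn_cases a x₀ e₀
          · intro z
            rw [hya]
            exact divg_stepFn a x₀ hax e₀ he₀ z)
  obtain ⟨d, c1, c2, c3, c4⟩ := hmain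
  refine ⟨d, c1, c2, c3, ?_⟩
  rcases c4 with h | ⟨b, hb1, hb2, hb3, hb4⟩
  · exact Or.inl h
  · refine Or.inr ⟨b, hb1, ?_, ?_, hb3, hb4⟩
    · intro h; subst h; exact hb2 (by simp)
    · intro h; subst h; exact hb2 (by simp)

lemma extract (s t : V) (f : V → V → ℝ)
    (hcons : ∀ v, v ≠ s → v ≠ t → (∑ u, f u v) = (∑ x, f v x))
    (hne : ∃ p q : V, ¬ IsInt (f p q)) :
    ∃ d : V → V → ℝ,
      (∀ p q, d p q ≠ 0 → ¬ IsInt (f p q)) ∧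
      (∀ p q, d p q = -1 ∨ d p q = 0 ∨ d p q = 1) ∧
      (∃ p q, d p q ≠ 0) ∧
      ((∀ z, divg d z = 0) ∨
        (s ≠ t ∧ ((∀ z, divg d z = (if z = t then 1 else 0) - (if z = s then 1 else 0)) ∨
                  (∀ z, divg d z = (if z = s then 1 else 0) - (if z = t then 1 else 0))))) := by
  classical
  set A : Finset (V × V) := Finset.univ.filter (fun p : V × V => ¬ IsInt (f p.1 p.2)) with hAdef
  have hA : ∀ p q : V, (p, q) ∈ A ↔ ¬ IsInt (f p q) := by
    intro p q; simp [hAdef]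
  by_cases hloop : ∃ v : V, ¬ IsInt (f v v)
  · obtain ⟨v, hv⟩ := hloop
    refine ⟨fun p q => if (p, q) = (v, v) then 1 else 0, ?_, ?_, ⟨v, v, by simp⟩, Or.inl ?_⟩
    · intro p q h
      have : (p, q) = (v, v) := by by_contra hc; exact h (by simp [hc])
      injection this with h1 h2
      rw [h1, h2]; exact hv
    · intro p q; by_cases h : (p, q) = (v, v) <;> simp [h]
    · intro z
      simp only [divg, Prod.mk.injEq]
      by_cases hz : z = v <;> simp [hz]
  · have noloop : ∀ v : V, (v, v) ∉ A := by
      intro v hc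
      exact hloop ⟨v, (hA v v).mp hc⟩
    have hub := hub_of_cons s t f hcons A hA noloop
    have hAne : ∃ e ∈ A, True := by
      obtain ⟨p, q, h⟩ := hne
      exact ⟨(p, q), (hA p q).mpr h, trivial⟩
    -- helper to produce the "other endpoint" data
    have other : ∀ e₀ ∈ A, ∀ v : V, (e₀.1 = v ∨ e₀.2 = v) →
        ∃ x₀, (e₀ = (v, x₀) ∨ e₀ = (x₀, v)) ∧ v ≠ x₀ := by
      intro e₀ he₀A v hinc
      by_cases h1 : e₀.1 = v
      · refine ⟨e₀.2, Or.inl (Prod.ext h1 rfl), ?_⟩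
        intro h
        apply noloop v
        have : e₀ = (v, v) := Prod.ext h1 h.symm
        rwa [this] at he₀A
      · have h2 : e₀.2 = v := by tauto
        refine ⟨e₀.1, Or.inr (Prod.ext rfl h2), ?_⟩
        intro h
        apply noloop v
        have : e₀ = (v, v) := Prod.ext h.symm h2
        rwa [this] at he₀A
    have suppA : ∀ (d : V → V → ℝ), (∀ p q, d p q ≠ 0 → (p, q) ∈ A) →
        (∀ p q, d p q ≠ 0 → ¬ IsInt (f p q)) := by
      intro d h p q hd
      exact (hA p q).mp (h p q hd)
    by_cases hs : ∃ e ∈ A, e.1 = s ∨ e.2 = s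
    · obtain ⟨e₀, he₀A, he₀inc⟩ := hs
      obtain ⟨x₀, hx, hsx⟩ := other e₀ he₀A s he₀inc
      by_cases hxt : x₀ = t
      · -- immediate s-t path
        subst hxt
        refine ⟨stepFn s x₀ e₀, ?_, stepFn_cases s x₀ e₀, ⟨e₀.1, e₀.2, ?_⟩,
          Or.inr ⟨hsx, Or.inl ?_⟩⟩
        · intro p q h
          have := stepFn_supp s x₀ e₀ p q h
          exact (hA p q).mp (this ▸ he₀A)
        · rcases stepFn_self s x₀ e₀ with h | h <;> rw [h] <;> norm_num
        · intro z
          exact divg_stepFn s x₀ hsx e₀ hx z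
      · obtain ⟨d, c1, c2, c3, c4⟩ :=
          launch s t A noloop hub s x₀ e₀ he₀A hx hsx (fun h => hsx h.symm) hxt
        refine ⟨d, suppA d c1, c2, c3, ?_⟩
        rcases c4 with h | ⟨b, hb1, hb2, _, _, hb4⟩
        · exact Or.inl h
        · have hbt : b = t := by tauto
          subst hbt
          exact Or.inr ⟨fun h => hb2 h.symm, Or.inl hb4⟩
    · by_cases ht : ∃ e ∈ A, e.1 = t ∨ e.2 = t
      · obtain ⟨e₀, he₀A, he₀inc⟩ := ht
        obtain ⟨x₀, hx, htx⟩ := other e₀ he₀A t he₀inc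
        have hxs : x₀ ≠ s := by
          intro h
          apply hs
          refine ⟨e₀, he₀A, ?_⟩
          rcases hx with rfl | rfl
          · right; exact h
          · left; exact h
        obtain ⟨d, c1, c2, c3, c4⟩ :=
          launch s t A noloop hub t x₀ e₀ he₀A hx htx hxs (fun h => htx h.symm)
        refine ⟨d, suppA d c1, c2, c3, ?_⟩
        rcases c4 with h | ⟨b, hb1, hb2, _, _, hb4⟩
        · exact Or.inl h
        · have hbs : b = s := by tauto
          subst hbs
          exact Or.inr ⟨fun h => hb2 h, Or.inr hb4⟩
      · obtain ⟨e₀, he₀A, _⟩ := hAne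
        obtain ⟨x₀, hx, hax⟩ := other e₀ he₀A e₀.1 (Or.inl rfl)
        have hxs : x₀ ≠ s := by
          intro h
          apply hs
          refine ⟨e₀, he₀A, ?_⟩
          rcases hx with he | he <;> rw [he] <;> simp [h]
        have hxt : x₀ ≠ t := by
          intro h
          apply ht
          refine ⟨e₀, he₀A, ?_⟩
          rcases hx with he | he <;> rw [he] <;> simp [h]
        obtain ⟨d, c1, c2, c3, c4⟩ :=
          launch s t A noloop hub e₀.1 x₀ e₀ he₀A hx hax hxs hxt
        refine ⟨d, suppA d c1, c2, c3, ?_⟩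
        rcases c4 with h | ⟨b, hb1, _, _, ⟨p, hpA, hpinc⟩, _⟩
        · exact Or.inl h
        · exfalso
          rcases hb1 with rfl | rfl
          · exact hs ⟨p, hpA, hpinc⟩
          · exact ht ⟨p, hpA, hpinc⟩


lemma flowValue_perturb (s : V) (f d : V → V → ℝ) (τ : ℝ) :
    flowValue s (fun p q => f p q + τ * d p q) = flowValue s f - τ * divg d s := by
  unfold flowValue divg
  rw [Finset.sum_add_distrib, Finset.sum_add_distrib, ← Finset.mul_sum, ← Finset.mul_sum]
  ring

lemma flowCost_perturb (w : V → V → ℤ) (f d : V → V → ℝ) (τ : ℝ) :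
    flowCost w (fun p q => f p q + τ * d p q)
      = flowCost w f + τ * ∑ u, ∑ v, (w u v : ℝ) * d u v := by
  unfold flowCost
  rw [Finset.mul_sum, ← Finset.sum_add_distrib]
  apply Finset.sum_congr rfl
  intro u _
  rw [Finset.mul_sum, ← Finset.sum_add_distrib]
  apply Finset.sum_congr rfl
  intro v _
  ring

lemma frac_bounds {x : ℝ} (h : ¬ IsInt x) : (⌊x⌋ : ℝ) < x ∧ x < (⌈x⌉ : ℝ) := by
  constructor
  · rcases lt_or_eq_of_le (Int.floor_le x) with h' | h'
    · exact h'
    · exact absurd ⟨⌊x⌋, h'.symm⟩ h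
  · rcases lt_or_eq_of_le (Int.le_ceil x) with h' | h'
    · exact h'
    · exact absurd ⟨⌈x⌉, h'⟩ h

lemma abs_le_one_of_tri {x : ℝ} (h : x = -1 ∨ x = 0 ∨ x = 1) : |x| ≤ 1 := by
  rcases h with rfl | rfl | rfl <;> norm_num

lemma feasible_perturb (s t : V) (c : V → V → ℕ) (f d : V → V → ℝ) (τ : ℝ)
    (hf : FlowFeasible s t c f)
    (hsupp : ∀ p q, d p q ≠ 0 → ¬ IsInt (f p q))
    (htri : ∀ p q, d p q = -1 ∨ d p q = 0 ∨ d p q = 1)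
    (hdiv : ∀ v, v ≠ s → v ≠ t → divg d v = 0)
    (hτ : ∀ p q, d p q ≠ 0 →
      |τ| ≤ min (f p q - (⌊f p q⌋ : ℝ)) ((⌈f p q⌉ : ℝ) - f p q)) :
    FlowFeasible s t c (fun p q => f p q + τ * d p q) := by
  constructor
  · intro u v
    by_cases hd : d u v = 0
    · simp only [hd, mul_zero, add_zero]
      exact hf.1 u v
    · have hb := hτ u v hd
      have h1 : |τ * d u v| ≤ |τ| := by
        rw [abs_mul]
        calc |τ| * |d u v| ≤ |τ| * 1 := by
              exact mul_le_mul_of_nonneg_left (abs_le_one_of_tri (htri u v)) (abs_nonneg τ)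
          _ = |τ| := mul_one _
      have hfl : (0 : ℝ) ≤ (⌊f u v⌋ : ℝ) := by
        have := (hf.1 u v).1
        exact_mod_cast Int.floor_nonneg.mpr this
      have hcl : ((⌈f u v⌉ : ℝ)) ≤ (c u v : ℝ) := by
        have := (hf.1 u v).2
        exact_mod_cast Int.ceil_le.mpr (by exact_mod_cast this)
      have habs := abs_le.mp h1
      have hb1 : |τ| ≤ f u v - (⌊f u v⌋ : ℝ) := le_trans hb (min_le_left _ _)
      have hb2 : |τ| ≤ (⌈f u v⌉ : ℝ) - f u v := le_trans hb (min_le_right _ _)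
      have hτa := abs_le.mp (le_refl |τ|)
      constructor
      · show (0:ℝ) ≤ f u v + τ * d u v
        nlinarith [abs_nonneg (τ * d u v)]
      · show f u v + τ * d u v ≤ (c u v : ℝ)
        nlinarith [abs_nonneg (τ * d u v)]
  · intro v hvs hvt
    have hc := hf.2 v hvs hvt
    have hdv := hdiv v hvs hvt
    unfold divg at hdv
    rw [Finset.sum_add_distrib, Finset.sum_add_distrib, ← Finset.mul_sum, ← Finset.mul_sum, hc]
    have : (∑ u, d u v) = ∑ x, d v x := by linarith
    rw [this]

lemma cost_coeff_bound (w : V → V → ℤ) (d : V → V → ℝ)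
    (htri : ∀ p q, d p q = -1 ∨ d p q = 0 ∨ d p q = 1) :
    |∑ u, ∑ v, (w u v : ℝ) * d u v| ≤ ((∑ u, ∑ v, |w u v| : ℤ) : ℝ) := by
  calc |∑ u, ∑ v, (w u v : ℝ) * d u v| ≤ ∑ u, |∑ v, (w u v : ℝ) * d u v| :=
        Finset.abs_sum_le_sum_abs _ _
    _ ≤ ∑ u, ∑ v, |(w u v : ℝ) * d u v| :=
        Finset.sum_le_sum (fun u _ => Finset.abs_sum_le_sum_abs _ _)
    _ ≤ ∑ u, ∑ v, |(w u v : ℝ)| := by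
        apply Finset.sum_le_sum; intro u _
        apply Finset.sum_le_sum; intro v _
        rw [abs_mul]
        calc |(w u v : ℝ)| * |d u v| ≤ |(w u v : ℝ)| * 1 :=
              mul_le_mul_of_nonneg_left (abs_le_one_of_tri (htri u v)) (abs_nonneg _)
          _ = |(w u v : ℝ)| := mul_one _
    _ = ((∑ u, ∑ v, |w u v| : ℤ) : ℝ) := by push_cast; rfl

lemma exists_minimizer (s t : V) (c : V → V → ℕ) (F : (V → V → ℝ) → ℝ)
    (hF : Continuous F) :
    ∃ f, FlowFeasible s t c f ∧ ∀ g, FlowFeasible s t c g → F f ≤ F g := by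
  have h0 : FlowFeasible s t c (fun _ _ => 0) :=
    ⟨fun u v => ⟨le_refl 0, by positivity⟩, fun v _ _ => by simp⟩
  set P : Set (V → V → ℝ) := {f | FlowFeasible s t c f} with hP
  have hev : ∀ u v : V, Continuous (fun f : V → V → ℝ => f u v) :=
    fun u v => (continuous_apply v).comp (continuous_apply u)
  have hPclosed : IsClosed P := by
    have h1 : IsClosed {f : V → V → ℝ | ∀ u v, 0 ≤ f u v ∧ f u v ≤ (c u v : ℝ)} := by
      have : {f : V → V → ℝ | ∀ u v, 0 ≤ f u v ∧ f u v ≤ (c u v : ℝ)}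
          = ⋂ u, ⋂ v, ({f : V → V → ℝ | 0 ≤ f u v} ∩ {f | f u v ≤ (c u v : ℝ)}) := by
        ext f; simp [Set.mem_iInter, forall_and]
      rw [this]
      exact isClosed_iInter fun u => isClosed_iInter fun v =>
        (isClosed_le continuous_const (hev u v)).inter (isClosed_le (hev u v) continuous_const)
    have h2 : IsClosed {f : V → V → ℝ | ∀ v, v ≠ s → v ≠ t → (∑ u, f u v) = (∑ x, f v x)} := by
      have : {f : V → V → ℝ | ∀ v, v ≠ s → v ≠ t → (∑ u, f u v) = (∑ x, f v x)}
          = ⋂ v, {f : V → V → ℝ | v ≠ s → v ≠ t → (∑ u, f u v) = (∑ x, f v x)} := by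
        ext f; simp [Set.mem_iInter]
      rw [this]
      apply isClosed_iInter
      intro v
      by_cases hv : v ≠ s ∧ v ≠ t
      · have : {f : V → V → ℝ | v ≠ s → v ≠ t → (∑ u, f u v) = (∑ x, f v x)}
            = {f : V → V → ℝ | (∑ u, f u v) = (∑ x, f v x)} := by
          ext f; simp [hv.1, hv.2]
        rw [this]
        exact isClosed_eq (continuous_finset_sum _ fun u _ => hev u v)
          (continuous_finset_sum _ fun x _ => hev v x)
      · have : {f : V → V → ℝ | v ≠ s → v ≠ t → (∑ u, f u v) = (∑ x, f v x)} = Set.univ := by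
          ext f; simp only [Set.mem_setOf_eq, Set.mem_univ, iff_true]
          intro h1 h2
          exact absurd ⟨h1, h2⟩ hv
        rw [this]
        exact isClosed_univ
    have : P = {f : V → V → ℝ | ∀ u v, 0 ≤ f u v ∧ f u v ≤ (c u v : ℝ)} ∩
        {f : V → V → ℝ | ∀ v, v ≠ s → v ≠ t → (∑ u, f u v) = (∑ x, f v x)} := by
      ext f; exact Iff.rfl
    rw [this]
    exact h1.inter h2
  have hKcomp : IsCompact (Set.pi Set.univ fun u : V =>
      Set.pi Set.univ fun v : V => Set.Icc (0 : ℝ) (c u v)) :=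
    isCompact_univ_pi fun u => isCompact_univ_pi fun v => isCompact_Icc
  have hPsub : P ⊆ Set.pi Set.univ fun u : V =>
      Set.pi Set.univ fun v : V => Set.Icc (0 : ℝ) (c u v) := by
    intro f hf
    intro u _
    intro v _
    exact ⟨(hf.1 u v).1, (hf.1 u v).2⟩
  have hPcomp : IsCompact P := hKcomp.of_isClosed_subset hPclosed hPsub
  obtain ⟨f, hfP, hmin⟩ := hPcomp.exists_isMinOn ⟨_, h0⟩ hF.continuousOn
  exact ⟨f, hfP, fun g hg => hmin hg⟩

lemma continuous_obj (s : V) (M : ℤ) (w : V → V → ℤ) :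
    Continuous (fun h : V → V → ℝ => flowCost w h - (M : ℝ) * flowValue s h) := by
  have hev : ∀ u v : V, Continuous (fun f : V → V → ℝ => f u v) :=
    fun u v => (continuous_apply v).comp (continuous_apply u)
  apply Continuous.sub
  · exact continuous_finset_sum _ fun u _ =>
      continuous_finset_sum _ fun v _ => continuous_const.mul (hev u v)
  · exact continuous_const.mul ((continuous_finset_sum _ fun x _ => hev s x).sub
      (continuous_finset_sum _ fun u _ => hev u s))



noncomputable def fracSet (f : V → V → ℝ) : Finset (V × V) :=
  Finset.univ.filter (fun p : V × V => ¬ IsInt (f p.1 p.2))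

lemma descent (s t : V) (c : V → V → ℕ) (M : ℤ) (w : V → V → ℤ)
    (hM : (∑ u, ∑ v, |w u v| : ℤ) < M)
    (f : V → V → ℝ) (hfeas : FlowFeasible s t c f)
    (hmin : ∀ g, FlowFeasible s t c g →
      flowCost w f - M * flowValue s f ≤ flowCost w g - M * flowValue s g)
    (hfrac : (fracSet f).Nonempty) :
    ∃ f', FlowFeasible s t c f' ∧
      (∀ g, FlowFeasible s t c g →
        flowCost w f' - M * flowValue s f' ≤ flowCost w g - M * flowValue s g) ∧
      (fracSet f').card < (fracSet f).card := by
  obtain ⟨p₀, hp₀⟩ := hfrac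
  have hne : ∃ p q : V, ¬ IsInt (f p q) := ⟨p₀.1, p₀.2, by simpa [fracSet] using hp₀⟩
  obtain ⟨d, hsupp, htri, ⟨pn, qn, hpn⟩, hdivcase⟩ := extract s t f hfeas.2 hne
  have hdiv0 : ∀ v, v ≠ s → v ≠ t → divg d v = 0 := by
    rcases hdivcase with h | ⟨hst, h | h⟩
    · intro v _ _; exact h v
    · intro v hvs hvt; rw [h v]; simp [hvt, hvs]
    · intro v hvs hvt; rw [h v]; simp [hvt, hvs]
  set SD : Finset (V × V) := Finset.univ.filter (fun p : V × V => d p.1 p.2 ≠ 0) with hSD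
  have hSDne : SD.Nonempty := ⟨(pn, qn), by simp [hSD, hpn]⟩
  set gap : V × V → ℝ :=
    fun p => min (f p.1 p.2 - (⌊f p.1 p.2⌋ : ℝ)) ((⌈f p.1 p.2⌉ : ℝ) - f p.1 p.2) with hgapdef
  set t₀ := SD.inf' hSDne gap with ht₀
  have ht₀pos : 0 < t₀ := by
    rw [ht₀, Finset.lt_inf'_iff]
    intro p hp
    have hd : d p.1 p.2 ≠ 0 := by simpa [hSD] using hp
    obtain ⟨h1, h2⟩ := frac_bounds (hsupp _ _ hd)
    simp only [hgapdef, lt_min_iff]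
    constructor <;> linarith
  have hfeas' : ∀ τ : ℝ, |τ| ≤ t₀ → FlowFeasible s t c (fun p q => f p q + τ * d p q) := by
    intro τ hτ
    apply feasible_perturb s t c f d τ hfeas hsupp htri hdiv0
    intro p q hd
    have hmem : (p, q) ∈ SD := by simp [hSD, hd]
    exact le_trans hτ (Finset.inf'_le _ hmem)
  set K : ℝ := (∑ u, ∑ v, (w u v : ℝ) * d u v) + M * divg d s with hK
  have hL : ∀ τ : ℝ, flowCost w (fun p q => f p q + τ * d p q)
      - M * flowValue s (fun p q => f p q + τ * d p q)
      = (flowCost w f - M * flowValue s f) + τ * K := by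
    intro τ
    rw [flowCost_perturb, flowValue_perturb, hK]
    ring
  have hKzero : K = 0 := by
    have h1 := hmin _ (hfeas' t₀ (le_of_eq (abs_of_pos ht₀pos)))
    have h2 := hmin _ (hfeas' (-t₀) (le_of_eq (by rw [abs_neg, abs_of_pos ht₀pos])))
    rw [hL t₀] at h1
    rw [hL (-t₀)] at h2
    nlinarith
  rcases hdivcase with hcycle | ⟨hst, hpath⟩
  swap
  · exfalso
    have hbound := cost_coeff_bound w d htri
    have hdivs : divg d s = -1 ∨ divg d s = 1 := by
      rcases hpath with h | h
      · left; rw [h s]; simp [hst]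
      · right; rw [h s]; simp [hst]
    have hMpos : (0:ℝ) < (M:ℝ) := by
      have h0 : (0:ℤ) ≤ ∑ u, ∑ v, |w u v| :=
        Finset.sum_nonneg fun u _ => Finset.sum_nonneg fun v _ => abs_nonneg _
      exact_mod_cast lt_of_le_of_lt h0 hM
    have hWM : ((∑ u, ∑ v, |w u v| : ℤ) : ℝ) < (M:ℝ) := by exact_mod_cast hM
    have heq : (∑ u, ∑ v, (w u v : ℝ) * d u v) = - ((M:ℝ) * divg d s) := by
      rw [hK] at hKzero; linarith
    rcases hdivs with h | h
    · rw [h] at heq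
      have heq2 : (∑ u, ∑ v, (w u v : ℝ) * d u v) = (M:ℝ) := by rw [heq]; ring
      rw [heq2, abs_of_pos hMpos] at hbound
      linarith
    · rw [h] at heq
      have heq2 : (∑ u, ∑ v, (w u v : ℝ) * d u v) = -(M:ℝ) := by rw [heq]; ring
      rw [heq2, abs_neg, abs_of_pos hMpos] at hbound
      linarith
  · obtain ⟨pstar, hpstar, hgapstar⟩ := Finset.exists_mem_eq_inf' hSDne gap
    have hdstar : d pstar.1 pstar.2 ≠ 0 := by simpa [hSD] using hpstar
    have hfracstar : ¬ IsInt (f pstar.1 pstar.2) := hsupp _ _ hdstar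
    have hdpm : d pstar.1 pstar.2 = -1 ∨ d pstar.1 pstar.2 = 1 := by
      rcases htri pstar.1 pstar.2 with h | h | h
      · exact Or.inl h
      · exact absurd h hdstar
      · exact Or.inr h
    have ht₀gap : t₀ = min (f pstar.1 pstar.2 - (⌊f pstar.1 pstar.2⌋ : ℝ))
        ((⌈f pstar.1 pstar.2⌉ : ℝ) - f pstar.1 pstar.2) := hgapstar
    obtain ⟨τ, hτabs, hτint⟩ : ∃ τ : ℝ, |τ| = t₀ ∧
        IsInt (f pstar.1 pstar.2 + τ * d pstar.1 pstar.2) := by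
      rcases min_cases (f pstar.1 pstar.2 - (⌊f pstar.1 pstar.2⌋ : ℝ))
          ((⌈f pstar.1 pstar.2⌉ : ℝ) - f pstar.1 pstar.2) with ⟨hmineq, _⟩ | ⟨hmineq, _⟩
      · rw [hmineq] at ht₀gap
        rcases hdpm with hd | hd
        · refine ⟨t₀, abs_of_pos ht₀pos, ⟨⌊f pstar.1 pstar.2⌋, by rw [hd]; linarith⟩⟩
        · refine ⟨-t₀, by rw [abs_neg, abs_of_pos ht₀pos], ⟨⌊f pstar.1 pstar.2⌋, by rw [hd]; linarith⟩⟩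
      · rw [hmineq] at ht₀gap
        rcases hdpm with hd | hd
        · refine ⟨-t₀, by rw [abs_neg, abs_of_pos ht₀pos], ⟨⌈f pstar.1 pstar.2⌉, by rw [hd]; linarith⟩⟩
        · refine ⟨t₀, abs_of_pos ht₀pos, ⟨⌈f pstar.1 pstar.2⌉, by rw [hd]; linarith⟩⟩
    refine ⟨fun p q => f p q + τ * d p q, hfeas' τ (le_of_eq hτabs), ?_, ?_⟩
    · intro g hg
      rw [hL τ, hKzero]
      simpa using hmin g hg
    · have hsub : fracSet (fun p q => f p q + τ * d p q) ⊆ fracSet f := by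
        intro p hp
        have hp' : ¬ IsInt (f p.1 p.2 + τ * d p.1 p.2) := by simpa [fracSet] using hp
        simp only [fracSet, Finset.mem_filter, Finset.mem_univ, true_and]
        by_cases hd : d p.1 p.2 = 0
        · rw [hd, mul_zero, add_zero] at hp'
          exact hp'
        · exact hsupp _ _ hd
      have hout : pstar ∉ fracSet (fun p q => f p q + τ * d p q) := by
        simp only [fracSet, Finset.mem_filter, Finset.mem_univ, true_and, not_not]
        exact hτint
      have hin : pstar ∈ fracSet f := by
        simp only [fracSet, Finset.mem_filter, Finset.mem_univ, true_and]
        exact hfracstar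
      exact Finset.card_lt_card ((Finset.ssubset_iff_of_subset hsub).mpr ⟨pstar, hin, hout⟩)

lemma exists_integral_minimizer (s t : V) (c : V → V → ℕ) (M : ℤ) (w : V → V → ℤ)
    (hM : (∑ u, ∑ v, |w u v| : ℤ) < M) :
    ∃ f, FlowFeasible s t c f ∧ (∀ u v, IsInt (f u v)) ∧
      ∀ g, FlowFeasible s t c g →
        flowCost w f - M * flowValue s f ≤ flowCost w g - M * flowValue s g := by
  obtain ⟨f0, hf0, hmin0⟩ := exists_minimizer s t c _ (continuous_obj s M w)
  suffices h : ∀ (n : ℕ) (f : V → V → ℝ), FlowFeasible s t c f →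
      (∀ g, FlowFeasible s t c g →
        flowCost w f - M * flowValue s f ≤ flowCost w g - M * flowValue s g) →
      (fracSet f).card = n →
      ∃ f', FlowFeasible s t c f' ∧ (∀ u v, IsInt (f' u v)) ∧
        ∀ g, FlowFeasible s t c g →
          flowCost w f' - M * flowValue s f' ≤ flowCost w g - M * flowValue s g by
    exact h (fracSet f0).card f0 hf0 hmin0 rfl
  intro n
  induction n using Nat.strong_induction_on with
  | _ n IH =>
  intro f hf hmin hcard
  by_cases hfr : (fracSet f).Nonempty
  · obtain ⟨f', h1, h2, h3⟩ := descent s t c M w hM f hf hmin hfr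
    exact IH (fracSet f').card (hcard ▸ h3) f' h1 h2 rfl
  · refine ⟨f, hf, ?_, hmin⟩
    intro u v
    by_contra hc
    exact hfr ⟨(u, v), by simp [fracSet, hc]⟩

lemma isInt_flowValue (s : V) (f : V → V → ℝ) (hint : ∀ u v, IsInt (f u v)) :
    IsInt (flowValue s f) :=
  (IsInt.sum _ _ fun x _ => hint s x).sub (IsInt.sum _ _ fun u _ => hint u s)

lemma flowCost_bound (s t : V) (c : V → V → ℕ) (w : V → V → ℤ) (g : V → V → ℝ)
    (hg : FlowFeasible s t c g) :
    |flowCost w g| ≤ ((∑ u, ∑ v, |w u v| * (c u v : ℤ) : ℤ) : ℝ) := by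
  calc |flowCost w g| ≤ ∑ u, |∑ v, (w u v : ℝ) * g u v| := Finset.abs_sum_le_sum_abs _ _
    _ ≤ ∑ u, ∑ v, |(w u v : ℝ) * g u v| :=
        Finset.sum_le_sum (fun u _ => Finset.abs_sum_le_sum_abs _ _)
    _ ≤ ∑ u, ∑ v, |(w u v : ℝ)| * (c u v : ℝ) := by
        apply Finset.sum_le_sum; intro u _
        apply Finset.sum_le_sum; intro v _
        rw [abs_mul]
        apply mul_le_mul_of_nonneg_left _ (abs_nonneg _)
        rw [abs_of_nonneg (hg.1 u v).1]
        exact (hg.1 u v).2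
    _ = ((∑ u, ∑ v, |w u v| * (c u v : ℤ) : ℤ) : ℝ) := by push_cast; rfl

end MCMF

open MCMF

/-- With integer capacities and integer costs, there exists an integer-valued
maximum flow of minimum cost: the minimum of the cost over the polytope of
maximum flows is attained at an integral point. -/
theorem exists_integral_min_cost_max_flow {V : Type*} [Fintype V] (s t : V)
    (c : V → V → ℕ) (w : V → V → ℤ) :
    ∃ f : V → V → ℝ, FlowFeasible s t c f ∧ (∀ u v, ∃ z : ℤ, f u v = (z : ℝ)) ∧
      (∀ g, FlowFeasible s t c g → flowValue s g ≤ flowValue s f) ∧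
      ∀ g, FlowFeasible s t c g →
        (∀ h, FlowFeasible s t c h → flowValue s h ≤ flowValue s g) →
        flowCost w f ≤ flowCost w g := by
  classical
  set W : ℤ := ∑ u, ∑ v, |w u v| with hW
  set Cc : ℤ := ∑ u, ∑ v, |w u v| * (c u v : ℤ) with hCc
  have hWnn : 0 ≤ W :=
    Finset.sum_nonneg fun u _ => Finset.sum_nonneg fun v _ => abs_nonneg _
  have hCnn : 0 ≤ Cc :=
    Finset.sum_nonneg fun u _ => Finset.sum_nonneg fun v _ =>
      mul_nonneg (abs_nonneg _) (Int.natCast_nonneg _)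
  set M : ℤ := W + 2 * Cc + 1 with hM
  have hMW : W < M := by omega
  obtain ⟨f, hffeas, hfint, hfmin⟩ := exists_integral_minimizer s t c M w hMW
  obtain ⟨f₁, h1feas, h1int, h1min⟩ :=
    exists_integral_minimizer s t c 1 (fun _ _ => 0) (by simp)
  have hcost0 : ∀ h : V → V → ℝ, flowCost (fun _ _ => (0:ℤ)) h = 0 := by
    intro h; simp [flowCost]
  have h1max : ∀ g, FlowFeasible s t c g → flowValue s g ≤ flowValue s f₁ := by
    intro g hg
    have := h1min g hg
    rw [hcost0, hcost0] at this
    push_cast at this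
    linarith
  obtain ⟨zf, hzf⟩ := isInt_flowValue s f hfint
  obtain ⟨z1, hz1⟩ := isInt_flowValue s f₁ h1int
  have hle : flowValue s f ≤ flowValue s f₁ := h1max f hffeas
  have hLf : flowCost w f - M * flowValue s f ≤ flowCost w f₁ - M * flowValue s f₁ :=
    hfmin f₁ h1feas
  have hb1 := flowCost_bound s t c w f hffeas
  have hb2 := flowCost_bound s t c w f₁ h1feas
  rw [← hCc] at hb1 hb2
  have hveq : flowValue s f = flowValue s f₁ := by
    have hdge : (0:ℤ) ≤ z1 - zf := by
      have : (zf:ℝ) ≤ (z1:ℝ) := by rw [← hzf, ← hz1]; exact hle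
      have : zf ≤ z1 := by exact_mod_cast this
      omega
    have hkey : (M:ℝ) * ((z1:ℝ) - (zf:ℝ)) ≤ 2 * (Cc:ℝ) := by
      have ha1 := abs_le.mp hb1
      have ha2 := abs_le.mp hb2
      rw [hzf, hz1] at hLf
      nlinarith
    have hkeyZ : M * (z1 - zf) ≤ 2 * Cc := by
      have : ((M * (z1 - zf) : ℤ) : ℝ) ≤ ((2 * Cc : ℤ) : ℝ) := by push_cast; linarith
      exact_mod_cast this
    have hzz : z1 = zf := by
      by_contra hne
      have h1 : 1 ≤ z1 - zf := by omega
      have hMnn : 0 ≤ M := by omega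
      have : M * 1 ≤ M * (z1 - zf) := mul_le_mul_of_nonneg_left h1 hMnn
      omega
    rw [hzf, hz1, hzz]
  refine ⟨f, hffeas, hfint, ?_, ?_⟩
  · intro g hg
    rw [hveq]
    exact h1max g hg
  · intro g hg hgmax
    have hvg : flowValue s g = flowValue s f := by
      have h1 : flowValue s f ≤ flowValue s g := hgmax f hffeas
      have h2 : flowValue s g ≤ flowValue s f₁ := h1max g hg
      rw [← hveq] at h2
      linarith
    have := hfmin g hg
    rw [hvg] at this
    linarith
end

section
/- Let K ≥ 1, α > 0, and suppose relocation costs are zero. In the horizon-K taxi dispatch problem where serving a request at step k incurs artificial cost α·k (k = 0,…,K−1), an optimal solution of the scalarized problem with 0 < γ < 1/(α(K−1)) (interpreting the bound as γ > 0 arbitrary when K = 1) serves, at step 0, the maximum number of requests achievable at step 0 by any feasible dispatch; that is, g-total at step 0 under the optimal solution equals max over feasible x₀ of ∑_i min(d_{i,0} + ∑_j x_{j→i,0} − ∑_k x_{i→k,0}, r_{i,0}). -/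
open Finset

/-- Post-relocation driver count in cell `i`, given current counts `D` and a
single-step relocation matrix `xk`. -/
def postStep {n : ℕ} (D : Fin n → ℝ) (xk : Fin n → Fin n → ℝ) (i : Fin n) : ℝ :=
  D i + (∑ j, xk j i) - (∑ j, xk i j)

/-- Served requests in cell `i` in a single step: the minimum of the
post-relocation driver count and the request count `rk i`. -/
def gStep {n : ℕ} (D : Fin n → ℝ) (xk : Fin n → Fin n → ℝ) (rk : Fin n → ℝ)
    (i : Fin n) : ℝ :=
  min (postStep D xk i) (rk i)

/-- Driver trajectory generated by initial counts `d0`, request counts `r`,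
and relocation decisions `x` under the dispatch dynamics. -/
def traj {n : ℕ} (d0 : Fin n → ℝ) (r : ℕ → Fin n → ℝ)
    (x : ℕ → Fin n → Fin n → ℝ) : ℕ → Fin n → ℝ
  | 0 => d0
  | k + 1 => fun i =>
      postStep (traj d0 r x k) (x k) i - gStep (traj d0 r x k) (x k) (r k) i

/-- Feasibility of a horizon-`K` dispatch plan: nonnegativity, adjacency
constraints, and outflow bounded by the current driver count at every step. -/
def HorizonFeasible {n : ℕ} (K : ℕ) (L : Fin n → Fin n → ℕ)
    (d0 : Fin n → ℝ) (r : ℕ → Fin n → ℝ) (x : ℕ → Fin n → Fin n → ℝ) : Prop :=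
  ∀ k < K, ∀ i,
    (∀ j, 0 ≤ x k i j) ∧ (∀ j, L i j = 0 → x k i j = 0) ∧
      (∑ j, x k i j) ≤ traj d0 r x k i

/-- Scalarized horizon-`K` objective with zero relocation costs: total served
requests minus `γ` times the artificial cost `α·k` per request served at
step `k`. -/
noncomputable def scalarObj {n : ℕ} (K : ℕ) (γ α : ℝ) (d0 : Fin n → ℝ)
    (r : ℕ → Fin n → ℝ) (x : ℕ → Fin n → Fin n → ℝ) : ℝ :=
  (∑ k ∈ Finset.range K, ∑ i, gStep (traj d0 r x k) (x k) (r k) i) -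
    γ * (α * ∑ k ∈ Finset.range K,
      (k : ℝ) * ∑ i, gStep (traj d0 r x k) (x k) (r k) i)

lemma pm_lemma (a b c : ℝ) :
    max ((a - b) - (min a c - min b c)) 0 + (min a c - min b c) ≤ max (a - b) 0 := by
  rcases le_total a c with h1 | h1 <;> rcases le_total b c with h2 | h2 <;>
    simp [min_eq_left, min_eq_right, h1, h2, max_def] <;> split_ifs <;> linarith

lemma sub_min_eq_max (a b : ℝ) : a - min a b = max (a - b) 0 := by
  rcases le_total a b with h | h <;> simp [min_eq_left, min_eq_right, max_def, h] <;> linarith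

lemma max_shift (a s t : ℝ) (hs : 0 ≤ s) (hsa : s ≤ max a 0) (ht : 0 ≤ t) :
    max (a + t - s) 0 ≤ max a 0 - s + t := by
  rcases le_total a 0 with h | h
  · have : s = 0 := le_antisymm (by simpa [max_eq_right h] using hsa) hs
    subst this
    simp only [max_def]
    split_ifs <;> simp [max_eq_right h] <;> linarith
  · rw [max_eq_left h] at hsa ⊢
    simp only [max_def]; split_ifs <;> linarith


lemma traj_succ_nonneg {n : ℕ} (d0 : Fin n → ℝ) (r : ℕ → Fin n → ℝ)
    (x : ℕ → Fin n → Fin n → ℝ) (k : ℕ) (i : Fin n) :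
    0 ≤ traj d0 r x (k + 1) i := by
  show 0 ≤ postStep (traj d0 r x k) (x k) i - gStep (traj d0 r x k) (x k) (r k) i
  have := min_le_left (postStep (traj d0 r x k) (x k) i) (r k i)
  unfold gStep; linarith

lemma traj_nonneg {n : ℕ} (d0 : Fin n → ℝ) (r : ℕ → Fin n → ℝ)
    (x : ℕ → Fin n → Fin n → ℝ) (hd0 : ∀ i, 0 ≤ d0 i) (k : ℕ) (i : Fin n) :
    0 ≤ traj d0 r x k i := by
  cases k with
  | zero => exact hd0 i
  | succ k => exact traj_succ_nonneg d0 r x k i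

lemma sum_postStep {n : ℕ} (D : Fin n → ℝ) (xk : Fin n → Fin n → ℝ) :
    ∑ i, postStep D xk i = ∑ i, D i := by
  unfold postStep
  rw [Finset.sum_sub_distrib, Finset.sum_add_distrib, Finset.sum_comm]
  ring

/-- Reduce flows out of each cell to fit the available driver count `c`. -/
noncomputable def red {n : ℕ} (y : Fin n → Fin n → ℝ) (c : Fin n → ℝ) :
    Fin n → Fin n → ℝ :=
  fun i j => if (∑ j', y i j') ≤ c i then y i j else y i j * (c i / ∑ j', y i j')

lemma red_nonneg {n : ℕ} (y : Fin n → Fin n → ℝ) (c : Fin n → ℝ)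
    (hy : ∀ i j, 0 ≤ y i j) (hc : ∀ i, 0 ≤ c i) (i j : Fin n) : 0 ≤ red y c i j := by
  unfold red; split_ifs with h
  · exact hy i j
  · push_neg at h
    have hout : (0:ℝ) < ∑ j', y i j' := lt_of_le_of_lt (hc i) h
    exact mul_nonneg (hy i j) (div_nonneg (hc i) hout.le)

lemma red_le {n : ℕ} (y : Fin n → Fin n → ℝ) (c : Fin n → ℝ)
    (hy : ∀ i j, 0 ≤ y i j) (hc : ∀ i, 0 ≤ c i) (i j : Fin n) : red y c i j ≤ y i j := by
  unfold red; split_ifs with h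
  · exact le_rfl
  · push_neg at h
    have hout : (0:ℝ) < ∑ j', y i j' := lt_of_le_of_lt (hc i) h
    have : c i / ∑ j', y i j' ≤ 1 := by
      rw [div_le_one hout]; exact le_of_lt h
    calc y i j * (c i / ∑ j', y i j') ≤ y i j * 1 := by
          apply mul_le_mul_of_nonneg_left this (hy i j)
      _ = y i j := mul_one _

lemma red_zero {n : ℕ} (y : Fin n → Fin n → ℝ) (c : Fin n → ℝ) (i j : Fin n)
    (h : y i j = 0) : red y c i j = 0 := by
  unfold red; split_ifs <;> simp [h]

lemma red_sum {n : ℕ} (y : Fin n → Fin n → ℝ) (c : Fin n → ℝ)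
    (hy : ∀ i j, 0 ≤ y i j) (hc : ∀ i, 0 ≤ c i) (i : Fin n) :
    ∑ j, red y c i j = min (∑ j, y i j) (c i) := by
  unfold red
  split_ifs with h
  · simp [min_eq_left h]
  · push_neg at h
    have hout : (0:ℝ) < ∑ j', y i j' := lt_of_le_of_lt (hc i) h
    rw [← Finset.sum_mul]
    rw [min_eq_right (le_of_lt h)]
    field_simp

/-- Core one-step potential inequality. -/
lemma step_potential {n : ℕ} (rk : Fin n → ℝ) (d d' : Fin n → ℝ)
    (y : Fin n → Fin n → ℝ)
    (hy : ∀ i j, 0 ≤ y i j) (hd' : ∀ i, 0 ≤ d' i) (hout : ∀ i, ∑ j, y i j ≤ d i) :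
    (∑ i, max ((postStep d y i - gStep d y rk i)
        - (postStep d' (red y d') i - gStep d' (red y d') rk i)) 0)
      + ((∑ i, gStep d y rk i) - ∑ i, gStep d' (red y d') rk i)
    ≤ ∑ i, max (d i - d' i) 0 := by
  set y' := red y d' with hy'
  have hy'le : ∀ i j, y' i j ≤ y i j := red_le y d' hy hd'
  have hy'sum : ∀ i, ∑ j, y' i j = min (∑ j, y i j) (d' i) := red_sum y d' hy hd'
  -- step A: pointwise comparison of post-service states
  have stepA : ∀ i, max ((postStep d y i - gStep d y rk i)
        - (postStep d' y' i - gStep d' y' rk i)) 0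
        + (gStep d y rk i - gStep d' y' rk i)
      ≤ max (postStep d y i - postStep d' y' i) 0 := by
    intro i
    have := pm_lemma (postStep d y i) (postStep d' y' i) (rk i)
    unfold gStep
    convert this using 3 <;> ring
  -- step B : pointwise bound on post differences
  have stepB : ∀ i, max (postStep d y i - postStep d' y' i) 0
      ≤ max (d i - d' i) 0 - ((∑ j, y i j) - (∑ j, y' i j))
        + ((∑ j, (y j i)) - (∑ j, y' j i)) := by
    intro i
    have hs : (∑ j, y i j) - (∑ j, y' i j) = max ((∑ j, y i j) - d' i) 0 := by
      rw [hy'sum i]; exact sub_min_eq_max _ _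
    have hs0 : 0 ≤ (∑ j, y i j) - (∑ j, y' i j) := by
      rw [hs]; exact le_max_right _ _
    have hsle : (∑ j, y i j) - (∑ j, y' i j) ≤ max (d i - d' i) 0 := by
      rw [hs]
      exact max_le_max (by linarith [hout i]) le_rfl
    have ht0 : 0 ≤ (∑ j, (y j i)) - (∑ j, y' j i) := by
      rw [← Finset.sum_sub_distrib]
      exact Finset.sum_nonneg fun j _ => by linarith [hy'le j i]
    have := max_shift (d i - d' i) ((∑ j, y i j) - (∑ j, y' i j))
      ((∑ j, (y j i)) - (∑ j, y' j i)) hs0 hsle ht0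
    have hpost : postStep d y i - postStep d' y' i
        = (d i - d' i) + ((∑ j, (y j i)) - (∑ j, y' j i))
          - ((∑ j, y i j) - (∑ j, y' i j)) := by
      unfold postStep; ring
    rw [hpost]
    calc max ((d i - d' i) + ((∑ j, (y j i)) - (∑ j, y' j i))
          - ((∑ j, y i j) - (∑ j, y' i j))) 0
        = max ((d i - d' i) + ((∑ j, (y j i)) - (∑ j, y' j i))
          - ((∑ j, y i j) - (∑ j, y' i j))) 0 := rfl
      _ ≤ max (d i - d' i) 0 - ((∑ j, y i j) - (∑ j, y' i j))
          + ((∑ j, (y j i)) - (∑ j, y' j i)) := by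
          have h2 := max_shift (d i - d' i) ((∑ j, y i j) - (∑ j, y' i j))
            ((∑ j, (y j i)) - (∑ j, y' j i)) hs0 hsle ht0
          exact h2
  -- now sum everything
  have sumA : (∑ i, max ((postStep d y i - gStep d y rk i)
        - (postStep d' y' i - gStep d' y' rk i)) 0)
      + ((∑ i, gStep d y rk i) - ∑ i, gStep d' y' rk i)
      ≤ ∑ i, max (postStep d y i - postStep d' y' i) 0 := by
    rw [← Finset.sum_sub_distrib, ← Finset.sum_add_distrib]
    exact Finset.sum_le_sum fun i _ => stepA i
  have sumB : ∑ i, max (postStep d y i - postStep d' y' i) 0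
      ≤ ∑ i, max (d i - d' i) 0 := by
    have flux : (∑ i, ((∑ j, (y j i)) - (∑ j, y' j i)))
        = ∑ i, ((∑ j, y i j) - (∑ j, y' i j)) := by
      simp only [← Finset.sum_sub_distrib]
      exact Finset.sum_comm
    calc ∑ i, max (postStep d y i - postStep d' y' i) 0
        ≤ ∑ i, (max (d i - d' i) 0 - ((∑ j, y i j) - (∑ j, y' i j))
            + ((∑ j, (y j i)) - (∑ j, y' j i))) :=
          Finset.sum_le_sum fun i _ => stepB i
      _ = ∑ i, max (d i - d' i) 0 := by
          rw [Finset.sum_add_distrib, Finset.sum_sub_distrib, flux]; ring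
  linarith


/-- Auxiliary construction: state and relocation matrix of the comparison plan. -/
noncomputable def zAux {n : ℕ} (d0 : Fin n → ℝ) (r : ℕ → Fin n → ℝ)
    (xs : ℕ → Fin n → Fin n → ℝ) (z0 : Fin n → Fin n → ℝ) :
    ℕ → ((Fin n → ℝ) × (Fin n → Fin n → ℝ))
  | 0 => (d0, z0)
  | k + 1 =>
      let s := zAux d0 r xs z0 k
      let d' := fun i => postStep s.1 s.2 i - gStep s.1 s.2 (r k) i
      (d', red (xs (k + 1)) d')

noncomputable def zPlan {n : ℕ} (d0 : Fin n → ℝ) (r : ℕ → Fin n → ℝ)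
    (xs : ℕ → Fin n → Fin n → ℝ) (z0 : Fin n → Fin n → ℝ) :
    ℕ → Fin n → Fin n → ℝ :=
  fun k => (zAux d0 r xs z0 k).2

lemma zTraj {n : ℕ} (d0 : Fin n → ℝ) (r : ℕ → Fin n → ℝ)
    (xs : ℕ → Fin n → Fin n → ℝ) (z0 : Fin n → Fin n → ℝ) (k : ℕ) :
    traj d0 r (zPlan d0 r xs z0) k = (zAux d0 r xs z0 k).1 := by
  induction k with
  | zero => rfl
  | succ k ih =>
      show (fun i => postStep (traj d0 r (zPlan d0 r xs z0) k) (zPlan d0 r xs z0 k) i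
          - gStep (traj d0 r (zPlan d0 r xs z0) k) (zPlan d0 r xs z0 k) (r k) i) = _
      rw [ih]
      rfl

lemma scalarObj_eq {n : ℕ} (K : ℕ) (γ α : ℝ) (d0 : Fin n → ℝ)
    (r : ℕ → Fin n → ℝ) (x : ℕ → Fin n → Fin n → ℝ) :
    scalarObj K γ α d0 r x
      = ∑ k ∈ Finset.range K,
          (1 - γ * α * k) * ∑ i, gStep (traj d0 r x k) (x k) (r k) i := by
  unfold scalarObj
  rw [Finset.mul_sum, Finset.mul_sum, ← Finset.sum_sub_distrib]
  exact Finset.sum_congr rfl fun k _ => by ring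

lemma sum_split (K : ℕ) (hK : 1 ≤ K) (f : ℕ → ℝ) :
    ∑ k ∈ Finset.range K, f k = f 0 + ∑ k ∈ Finset.Icc 1 (K - 1), f k := by
  obtain ⟨m, rfl⟩ : ∃ m, K = m + 1 := ⟨K - 1, (Nat.succ_pred_eq_of_pos hK).symm⟩
  simp only [Nat.add_sub_cancel]
  rw [Finset.range_eq_Ico, Finset.sum_eq_sum_Ico_succ_bot (by omega) f,
    Finset.Ico_add_one_right_eq_Icc]

lemma abel_bound (K : ℕ) (w lam : ℕ → ℝ) (G W : ℝ)
    (hG : 0 ≤ G) (hW : 0 ≤ W)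
    (hwW : ∀ m, 1 ≤ m → m ≤ K - 1 → w m ≤ W)
    (hw0 : ∀ m, 1 ≤ m → m ≤ K - 1 → 0 ≤ w m)
    (hdec : ∀ m, w (m + 1) ≤ w m)
    (hlam : ∀ j, 1 ≤ j → j ≤ K - 1 → ∑ m ∈ Finset.Icc 1 j, lam m ≤ G) :
    ∑ m ∈ Finset.Icc 1 (K - 1), w m * lam m ≤ W * G := by
  rcases Nat.eq_zero_or_pos (K - 1) with h0 | hpos
  · rw [h0]; simp; positivity
  · -- induction claim
    have main : ∀ j, 1 ≤ j → j ≤ K - 1 →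
        ∑ m ∈ Finset.Icc 1 j, w m * lam m
          ≤ W * G - w j * (G - ∑ m ∈ Finset.Icc 1 j, lam m) := by
      intro j
      induction j with
      | zero => intro h; omega
      | succ j ih =>
          intro _ hj
          rcases Nat.eq_zero_or_pos j with hj0 | hj1
          · subst hj0
            simp only [Finset.Icc_self, Finset.sum_singleton]
            have h1 := hwW 1 le_rfl hj
            nlinarith
          · have hjK : j ≤ K - 1 := le_trans (Nat.le_succ j) hj
            have ihj := ih hj1 (le_trans (Nat.le_succ j) hj)
            rw [Finset.sum_Icc_succ_top (by omega : 1 ≤ j + 1),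
                Finset.sum_Icc_succ_top (by omega : 1 ≤ j + 1)]
            have hΛj := hlam j hj1 hjK
            have hmono := hdec j
            have hwj1 := hw0 (j+1) (by omega) hj
            nlinarith
    have := main (K - 1) hpos le_rfl
    have hΛ := hlam (K - 1) hpos le_rfl
    have hw := hw0 (K - 1) hpos le_rfl
    nlinarith


/-- Master inequality: any feasible single-step dispatch whose leftover
(post-service) driver counts are pointwise dominated by those of the optimal
plan's step 0 serves at most as much as the optimal plan's step 0. -/
lemma master_ineq {n : ℕ} (K : ℕ) (hK : 1 ≤ K)
    (L : Fin n → Fin n → ℕ) (d0 : Fin n → ℕ) (r : ℕ → Fin n → ℕ)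
    (γ α : ℝ) (hα : 0 < α) (hγ0 : 0 < γ)
    (hγ : K = 1 ∨ γ < 1 / (α * ((K : ℝ) - 1)))
    (xs : ℕ → Fin n → Fin n → ℝ)
    (hfeas : HorizonFeasible K L (fun i => (d0 i : ℝ))
      (fun k i => (r k i : ℝ)) xs)
    (hopt : ∀ x, HorizonFeasible K L (fun i => (d0 i : ℝ))
        (fun k i => (r k i : ℝ)) x →
      scalarObj K γ α (fun i => (d0 i : ℝ)) (fun k i => (r k i : ℝ)) x ≤
      scalarObj K γ α (fun i => (d0 i : ℝ)) (fun k i => (r k i : ℝ)) xs)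
    (z0 : Fin n → Fin n → ℝ)
    (hz0pos : ∀ i j, 0 ≤ z0 i j) (hz0adj : ∀ i j, L i j = 0 → z0 i j = 0)
    (hz0out : ∀ i, ∑ j, z0 i j ≤ (d0 i : ℝ))
    (hcap : ∀ j, max (postStep (fun i => (d0 i : ℝ)) z0 j - (r 0 j : ℝ)) 0
      ≤ max (postStep (fun i => (d0 i : ℝ)) (xs 0) j - (r 0 j : ℝ)) 0) :
    ∑ i, gStep (fun i => (d0 i : ℝ)) z0 (fun i => (r 0 i : ℝ)) i
      ≤ ∑ i, gStep (fun i => (d0 i : ℝ)) (xs 0) (fun i => (r 0 i : ℝ)) i := by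
  set d0f : Fin n → ℝ := fun i => (d0 i : ℝ) with hd0f
  set rf : ℕ → Fin n → ℝ := fun k i => (r k i : ℝ) with hrf
  have hd0nn : ∀ i, 0 ≤ d0f i := fun i => Nat.cast_nonneg _
  set zp := zPlan d0f rf xs z0 with hzp
  have hzp0 : zp 0 = z0 := rfl
  have hzpsucc : ∀ k, zp (k + 1) = red (xs (k + 1)) (traj d0f rf zp k.succ) := by
    intro k
    show (zAux d0f rf xs z0 (k+1)).2 = _
    rw [zTraj]
    rfl
  have hznn : ∀ k i, 0 ≤ traj d0f rf zp k i := traj_nonneg d0f rf zp hd0nn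
  have hxsnn : ∀ k, k < K → ∀ i j, 0 ≤ xs k i j := fun k hk i j => (hfeas k hk i).1 j
  -- the comparison plan is feasible
  have hfeasz : HorizonFeasible K L d0f rf zp := by
    intro k hk i
    cases k with
    | zero =>
        refine ⟨fun j => hz0pos i j, fun j hL => hz0adj i j hL, ?_⟩
        exact hz0out i
    | succ k =>
        rw [hzpsucc k]
        refine ⟨fun j => red_nonneg _ _ (hxsnn _ hk) (hznn _) i j,
          fun j hL => red_zero _ _ i j ((hfeas _ hk i).2.1 j hL), ?_⟩
        rw [red_sum _ _ (hxsnn _ hk) (hznn _) i]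
        exact min_le_right _ _
  -- abbreviations
  set Dxs : ℕ → Fin n → ℝ := traj d0f rf xs with hDxs
  set Dz : ℕ → Fin n → ℝ := traj d0f rf zp with hDz
  set Sxs : ℕ → ℝ := fun k => ∑ i, gStep (Dxs k) (xs k) (rf k) i with hSxs
  set Sz : ℕ → ℝ := fun k => ∑ i, gStep (Dz k) (zp k) (rf k) i with hSz
  set Φ : ℕ → ℝ := fun k => ∑ i, max (Dxs k i - Dz k i) 0 with hΦ
  have hΦnn : ∀ k, 0 ≤ Φ k := by
    intro k
    exact Finset.sum_nonneg fun i _ => le_max_right _ _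
  -- one step of the potential argument
  have hstep : ∀ k, k + 1 < K → Φ (k + 2) + (Sxs (k+1) - Sz (k+1)) ≤ Φ (k+1) := by
    intro k hk
    have hout : ∀ i, ∑ j, xs (k+1) i j ≤ Dxs (k+1) i := fun i => (hfeas (k+1) hk i).2.2
    have key := step_potential (rf (k+1)) (Dxs (k+1)) (Dz (k+1)) (xs (k+1))
      (hxsnn (k+1) hk) (hznn (k+1)) hout
    have hzpk' : zp (k+1) = red (xs (k+1)) (Dz (k+1)) := hzpsucc k
    have hDxs1 : Dxs (k+2) = fun i => postStep (Dxs (k+1)) (xs (k+1)) i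
        - gStep (Dxs (k+1)) (xs (k+1)) (rf (k+1)) i := rfl
    have hDz1 : Dz (k+2) = fun i => postStep (Dz (k+1)) (zp (k+1)) i
        - gStep (Dz (k+1)) (zp (k+1)) (rf (k+1)) i := rfl
    rw [hΦ]
    simp only [hDxs1, hDz1, hzpk']
    rw [hSxs, hSz]
    simp only [hzpk']
    exact key
  -- cumulative bound
  have hcum : ∀ j, j < K → Φ (j + 1) + ∑ m ∈ Finset.Icc 1 j, (Sxs m - Sz m) ≤ Φ 1 := by
    intro j
    induction j with
    | zero => intro _; simp
    | succ j ih =>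
        intro hj
        have hj' : j < K := by omega
        rw [Finset.sum_Icc_succ_top (by omega : 1 ≤ j + 1)]
        have h1 := hstep j hj
        have h2 := ih hj'
        linarith
  set G : ℝ := Sz 0 - Sxs 0 with hGdef
  -- Φ 1 = G
  have hD1le : ∀ i, Dz 1 i ≤ Dxs 1 i := by
    intro i
    have e1 : Dz 1 i = max (postStep d0f z0 i - rf 0 i) 0 := by
      show postStep d0f z0 i - gStep d0f z0 (rf 0) i = _
      unfold gStep
      exact sub_min_eq_max _ _
    have e2 : Dxs 1 i = max (postStep d0f (xs 0) i - rf 0 i) 0 := by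
      show postStep d0f (xs 0) i - gStep d0f (xs 0) (rf 0) i = _
      unfold gStep
      exact sub_min_eq_max _ _
    rw [e1, e2]
    exact hcap i
  have hΦ1 : Φ 1 = G := by
    rw [hΦ]
    have : ∀ i, max (Dxs 1 i - Dz 1 i) 0 = Dxs 1 i - Dz 1 i := by
      intro i
      exact max_eq_left (by linarith [hD1le i])
    show ∑ i, max (Dxs 1 i - Dz 1 i) 0 = G
    rw [Finset.sum_congr rfl fun i _ => this i, Finset.sum_sub_distrib]
    have exs : ∑ i, Dxs 1 i = (∑ i, d0f i) - Sxs 0 := by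
      show ∑ i, (postStep d0f (xs 0) i - gStep d0f (xs 0) (rf 0) i) = _
      rw [Finset.sum_sub_distrib, sum_postStep]
      rfl
    have ezs : ∑ i, Dz 1 i = (∑ i, d0f i) - Sz 0 := by
      show ∑ i, (postStep d0f z0 i - gStep d0f z0 (rf 0) i) = _
      rw [Finset.sum_sub_distrib, sum_postStep]
      rfl
    rw [exs, ezs]
    ring
  have hG0 : 0 ≤ G := hΦ1 ▸ hΦnn 1
  have hlam : ∀ j, 1 ≤ j → j ≤ K - 1 → ∑ m ∈ Finset.Icc 1 j, (Sxs m - Sz m) ≤ G := by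
    intro j _ hj
    have hjK : j < K := by omega
    have := hcum j hjK
    have := hΦnn (j + 1)
    linarith [hΦ1]
  set W : ℝ := max (1 - γ * α) 0 with hWdef
  have hW0 : 0 ≤ W := le_max_right _ _
  have hW1 : W < 1 := by
    apply max_lt _ one_pos
    nlinarith
  have hγα : 0 < γ * α := mul_pos hγ0 hα
  have hwW : ∀ m, 1 ≤ m → m ≤ K - 1 → (1 - γ * α * (m:ℝ)) ≤ W := by
    intro m hm _
    have : (1:ℝ) ≤ (m:ℝ) := by exact_mod_cast hm
    have h2 : (1 - γ * α * (m:ℝ)) ≤ 1 - γ * α := by nlinarith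
    exact le_trans h2 (le_max_left _ _)
  have hw0 : ∀ m, 1 ≤ m → m ≤ K - 1 → (0:ℝ) ≤ 1 - γ * α * (m:ℝ) := by
    intro m hm hmK
    have hK2 : 2 ≤ K := by omega
    rcases hγ with h1 | hlt
    · omega
    · have hKc : (0:ℝ) < α * ((K:ℝ) - 1) := by
        apply mul_pos hα
        have : (2:ℝ) ≤ (K:ℝ) := by exact_mod_cast hK2
        linarith
      have h2 : γ * (α * ((K:ℝ) - 1)) < 1 := (lt_div_iff₀ hKc).mp hlt
      have h3 : (m:ℝ) ≤ (K:ℝ) - 1 := by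
        have : (m:ℝ) ≤ ((K - 1 : ℕ):ℝ) := by exact_mod_cast hmK
        rwa [Nat.cast_sub hK, Nat.cast_one] at this
      nlinarith
  have hdec : ∀ m, (1 - γ * α * ((m+1:ℕ):ℝ)) ≤ 1 - γ * α * (m:ℕ) := by
    intro m
    push_cast
    nlinarith
  have habel := abel_bound K (fun m => 1 - γ * α * (m:ℝ)) (fun m => Sxs m - Sz m)
    G W hG0 hW0 hwW hw0 hdec hlam
  -- compare objectives
  have hobj := hopt zp hfeasz
  rw [scalarObj_eq, scalarObj_eq] at hobj
  rw [sum_split K hK, sum_split K hK] at hobj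
  have hcast0 : ((0:ℕ):ℝ) = 0 := by norm_num
  simp only [hcast0, mul_zero, sub_zero, one_mul] at hobj
  -- identify terms with Sxs / Sz
  have hobj' : Sz 0 + ∑ k ∈ Finset.Icc 1 (K-1), (1 - γ * α * (k:ℝ)) * Sz k
      ≤ Sxs 0 + ∑ k ∈ Finset.Icc 1 (K-1), (1 - γ * α * (k:ℝ)) * Sxs k := hobj
  have hsplit : ∑ m ∈ Finset.Icc 1 (K-1), (1 - γ * α * (m:ℝ)) * (Sxs m - Sz m)
      = (∑ k ∈ Finset.Icc 1 (K-1), (1 - γ * α * (k:ℝ)) * Sxs k)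
        - ∑ k ∈ Finset.Icc 1 (K-1), (1 - γ * α * (k:ℝ)) * Sz k := by
    rw [← Finset.sum_sub_distrib]
    exact Finset.sum_congr rfl fun k _ => by ring
  have hGW : G ≤ W * G := by
    rw [hsplit] at habel
    linarith
  have hGle : G ≤ 0 := by nlinarith
  have : Sz 0 ≤ Sxs 0 := by linarith
  exact this


/-- Feasibility of an assignment matrix: nonnegativity, adjacency support
(off-diagonal moves need an edge), rows summing to the initial driver counts. -/
def YFeas {n : ℕ} (L : Fin n → Fin n → ℕ) (d0f : Fin n → ℝ)
    (A : Fin n → Fin n → ℝ) : Prop :=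
  (∀ i j, 0 ≤ A i j) ∧ (∀ i j, i ≠ j → L i j = 0 → A i j = 0) ∧
    (∀ i, ∑ j, A i j = d0f i)

/-- Cells reachable from an overflow cell by reassigning drivers of a
single supplier row at a time. -/
inductive Reach {n : ℕ} (L : Fin n → Fin n → ℕ) (A : Fin n → Fin n → ℝ)
    (r0 : Fin n → ℝ) : Fin n → Prop
  | base (p : Fin n) : r0 p < (∑ i, A i p) → Reach L A r0 p
  | step (p i q : Fin n) : Reach L A r0 p → 0 < A i p → (i = q ∨ L i q ≠ 0) →
      Reach L A r0 q

/-- If no deficit cell is reachable, the assignment `A` maximizes the served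
requests among all feasible assignments. -/
lemma caseA {n : ℕ} (L : Fin n → Fin n → ℕ) (d0f : Fin n → ℝ)
    (A : Fin n → Fin n → ℝ) (r0 : Fin n → ℝ)
    (hA : YFeas L d0f A)
    (hnd : ∀ q, Reach L A r0 q → r0 q ≤ ∑ i, A i q)
    (B : Fin n → Fin n → ℝ) (hB : YFeas L d0f B) :
    ∑ j, min (∑ i, B i j) (r0 j) ≤ ∑ j, min (∑ i, A i j) (r0 j) := by
  classical
  obtain ⟨hBpos, hBadj, hBrow⟩ := hB
  obtain ⟨hApos, hAadj, hArow⟩ := hA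
  set Rs : Finset (Fin n) := univ.filter (fun q => Reach L A r0 q) with hRs
  set Xr : Finset (Fin n) := univ.filter
    (fun i => ∃ p, 0 < A i p ∧ Reach L A r0 p) with hXr
  -- rows with mass in reachable cells are confined to reachable cells (any plan)
  have hrowB : ∀ i ∈ Xr, ∑ j ∈ Rs, B i j = d0f i := by
    intro i hi
    rw [hXr, mem_filter] at hi
    obtain ⟨-, p, hAp, hRp⟩ := hi
    rw [← hBrow i]
    apply Finset.sum_subset (Finset.subset_univ Rs)
    intro q _ hq
    by_contra hBq
    have hBq' : 0 < B i q := lt_of_le_of_ne (hBpos i q) (Ne.symm hBq)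
    have hall : i = q ∨ L i q ≠ 0 := by
      by_contra hc
      push_neg at hc
      exact hBq (hBadj i q (fun h => hc.1 (h)) hc.2)
    have : Reach L A r0 q := Reach.step p i q hRp hAp hall
    exact hq (by rw [hRs, mem_filter]; exact ⟨mem_univ q, this⟩)
  -- mass comparison on the reachable set
  have hBmass : ∑ i ∈ Xr, d0f i ≤ ∑ j ∈ Rs, ∑ i, B i j := by
    rw [Finset.sum_comm]
    calc ∑ i ∈ Xr, d0f i = ∑ i ∈ Xr, ∑ j ∈ Rs, B i j :=
          Finset.sum_congr rfl fun i hi => (hrowB i hi).symm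
      _ ≤ ∑ i, ∑ j ∈ Rs, B i j := by
          apply Finset.sum_le_sum_of_subset_of_nonneg (Finset.subset_univ Xr)
          intro i _ _
          exact Finset.sum_nonneg fun j _ => hBpos i j
  have hAmass : ∑ j ∈ Rs, ∑ i, A i j ≤ ∑ i ∈ Xr, d0f i := by
    rw [Finset.sum_comm]
    have hvanish : ∀ i ∈ (univ : Finset (Fin n)), i ∉ Xr → ∑ j ∈ Rs, A i j = 0 := by
      intro i _ hi
      apply Finset.sum_eq_zero
      intro q hq
      rw [hRs, mem_filter] at hq
      by_contra hAq
      have : 0 < A i q := lt_of_le_of_ne (hApos i q) (Ne.symm hAq)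
      exact hi (by rw [hXr, mem_filter]; exact ⟨mem_univ i, q, this, hq.2⟩)
    rw [← Finset.sum_subset (Finset.subset_univ Xr) hvanish]
    apply Finset.sum_le_sum
    intro i _
    rw [← hArow i]
    apply Finset.sum_le_sum_of_subset_of_nonneg (Finset.subset_univ Rs)
    intro j _ _
    exact hApos i j
  -- totals
  have htot : ∑ j, ∑ i, B i j = ∑ j, ∑ i, A i j := by
    have h1 : ∑ j, ∑ i, B i j = ∑ i, ∑ j, B i j := Finset.sum_comm
    have h2 : ∑ j, ∑ i, A i j = ∑ i, ∑ j, A i j := Finset.sum_comm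
    rw [h1, h2, Finset.sum_congr rfl fun i _ => hBrow i,
      Finset.sum_congr rfl fun i _ => hArow i]
  -- decompose the two values over Rs and its complement
  have hsplitB := Finset.sum_filter_add_sum_filter_not univ
    (fun q => Reach L A r0 q) (fun j => min (∑ i, B i j) (r0 j))
  have hsplitA := Finset.sum_filter_add_sum_filter_not univ
    (fun q => Reach L A r0 q) (fun j => min (∑ i, A i j) (r0 j))
  have hsplitBc := Finset.sum_filter_add_sum_filter_not univ
    (fun q => Reach L A r0 q) (fun j => (∑ i, B i j))
  have hsplitAc := Finset.sum_filter_add_sum_filter_not univ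
    (fun q => Reach L A r0 q) (fun j => (∑ i, A i j))
  -- values on each part
  have hBR : ∑ j ∈ Rs, min (∑ i, B i j) (r0 j) ≤ ∑ j ∈ Rs, r0 j :=
    Finset.sum_le_sum fun j _ => min_le_right _ _
  have hBRc : ∑ j ∈ univ.filter (fun q => ¬ Reach L A r0 q), min (∑ i, B i j) (r0 j)
      ≤ ∑ j ∈ univ.filter (fun q => ¬ Reach L A r0 q), (∑ i, B i j) :=
    Finset.sum_le_sum fun j _ => min_le_left _ _
  have hAR : ∑ j ∈ Rs, min (∑ i, A i j) (r0 j) = ∑ j ∈ Rs, r0 j := by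
    apply Finset.sum_congr rfl
    intro j hj
    rw [hRs, mem_filter] at hj
    exact min_eq_right (hnd j hj.2)
  have hARc : ∑ j ∈ univ.filter (fun q => ¬ Reach L A r0 q), min (∑ i, A i j) (r0 j)
      = ∑ j ∈ univ.filter (fun q => ¬ Reach L A r0 q), (∑ i, A i j) := by
    apply Finset.sum_congr rfl
    intro j hj
    rw [mem_filter] at hj
    have : ¬ (r0 j < ∑ i, A i j) := fun h => hj.2 (Reach.base j h)
    exact min_eq_left (le_of_not_gt this)
  linarith

/-- Along the reachability relation one can shift a small amount of mass from
some overflow cell to the reached cell, staying feasible. -/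
lemma reach_perturb {n : ℕ} (L : Fin n → Fin n → ℕ) (d0f : Fin n → ℝ)
    (A : Fin n → Fin n → ℝ) (r0 : Fin n → ℝ) (hA : YFeas L d0f A) :
    ∀ p, Reach L A r0 p →
      ∃ ε₀ : ℝ, 0 < ε₀ ∧ ∃ C : ℝ, 0 ≤ C ∧ ∀ ε : ℝ, 0 < ε → ε ≤ ε₀ →
        ∃ Z : Fin n → Fin n → ℝ, ∃ o : Fin n,
          r0 o < (∑ i, A i o) ∧ YFeas L d0f Z ∧
          (∀ j, (∑ i, Z i j) = (∑ i, A i j)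
            + ε * ((if j = p then (1:ℝ) else 0) - (if j = o then 1 else 0))) ∧
          (∀ a b, A a b - C * ε ≤ Z a b) := by
  intro p hp
  induction hp with
  | base p hbase =>
      refine ⟨1, one_pos, 0, le_rfl, fun ε hε hε1 => ⟨A, p, hbase, hA, ?_, ?_⟩⟩
      · intro j
        split_ifs <;> ring
      · intro a b
        simp
  | step p i q hp hAip hallow ih =>
      obtain ⟨ε₀, hε₀, C, hC, H⟩ := ih
      have hCpos : (0:ℝ) < C + 1 := by linarith
      refine ⟨min ε₀ (A i p / (C + 1)), lt_min hε₀ (div_pos hAip hCpos), C + 1,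
        by linarith, ?_⟩
      intro ε hε hεle
      obtain ⟨Z, o, ho, hZfeas, hZcol, hZent⟩ :=
        H ε hε (le_trans hεle (min_le_left _ _))
      have hεA : (C + 1) * ε ≤ A i p := by
        have h1 : ε ≤ A i p / (C + 1) := le_trans hεle (min_le_right _ _)
        rw [le_div_iff₀ hCpos] at h1
        linarith
      have hZip : ε ≤ Z i p := by
        have := hZent i p
        nlinarith
      obtain ⟨hZpos, hZadj, hZrow⟩ := hZfeas
      set Z' : Fin n → Fin n → ℝ := fun a b =>
        Z a b + (if a = i ∧ b = q then ε else 0) - (if a = i ∧ b = p then ε else 0)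
        with hZ'
      have hsumq : ∀ a, ∑ b, (if a = i ∧ b = q then ε else 0)
          = if a = i then ε else 0 := by
        intro a
        by_cases h : a = i <;> simp [h]
      have hsump : ∀ a, ∑ b, (if a = i ∧ b = p then ε else 0)
          = if a = i then ε else 0 := by
        intro a
        by_cases h : a = i <;> simp [h]
      have hsumqc : ∀ b, ∑ a, (if a = i ∧ b = q then ε else 0)
          = if b = q then ε else 0 := by
        intro b
        by_cases h : b = q <;> simp [h]
      have hsumpc : ∀ b, ∑ a, (if a = i ∧ b = p then ε else 0)
          = if b = p then ε else 0 := by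
        intro b
        by_cases h : b = p <;> simp [h]
      refine ⟨Z', o, ho, ⟨?_, ?_, ?_⟩, ?_, ?_⟩
      · -- nonneg
        intro a b
        rw [hZ']
        dsimp only
        have hle : (if a = i ∧ b = p then ε else 0) ≤ Z a b := by
          split_ifs with h
          · obtain ⟨rfl, rfl⟩ := h
            exact hZip
          · exact hZpos a b
        have hq0 : (0:ℝ) ≤ (if a = i ∧ b = q then ε else 0) := by
          split_ifs <;> linarith
        linarith
      · -- adjacency support
        intro a b hab hL
        have hZab : Z a b = 0 := hZadj a b hab hL
        have h1 : ¬ (a = i ∧ b = q) := by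
          rintro ⟨rfl, rfl⟩
          rcases hallow with h | h
          · exact hab h
          · exact h hL
        have h2 : ¬ (a = i ∧ b = p) := by
          rintro ⟨rfl, rfl⟩
          have : a ≠ b → L a b = 0 → A a b = 0 := hA.2.1 a b
          rcases eq_or_ne a b with h | h
          · exact hab h
          · exact absurd (this h hL) (ne_of_gt hAip)
        simp [hZ', h1, h2, hZab]
      · -- rows
        intro a
        rw [hZ']
        simp only [Finset.sum_sub_distrib, Finset.sum_add_distrib]
        rw [hsumq a, hsump a, hZrow a]
        ring
      · -- columns
        intro j
        have : ∑ a, Z' a j = (∑ a, Z a j) + (if j = q then ε else 0)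
            - (if j = p then ε else 0) := by
          rw [hZ']
          simp only [Finset.sum_sub_distrib, Finset.sum_add_distrib]
          rw [hsumqc j, hsumpc j]
        rw [this, hZcol j]
        split_ifs <;> ring
      · -- entrywise lower bound
        intro a b
        have h0 := hZent a b
        rw [hZ']
        dsimp only
        have hp1 : (if a = i ∧ b = p then ε else 0) ≤ ε := by
          split_ifs <;> linarith
        have hq0 : (0:ℝ) ≤ (if a = i ∧ b = q then ε else 0) := by
          split_ifs <;> linarith
        nlinarith

/-- If a deficit cell is reachable, one can strictly improve the served
requests while keeping the per-cell leftover drivers pointwise dominated. -/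
lemma caseB {n : ℕ} (L : Fin n → Fin n → ℕ) (d0f : Fin n → ℝ)
    (A : Fin n → Fin n → ℝ) (r0 : Fin n → ℝ) (hA : YFeas L d0f A)
    (q' : Fin n) (hq : Reach L A r0 q') (hdf : (∑ i, A i q') < r0 q') :
    ∃ Z : Fin n → Fin n → ℝ, ∃ ε : ℝ, 0 < ε ∧ YFeas L d0f Z ∧
      (∀ j, max ((∑ i, Z i j) - r0 j) 0 ≤ max ((∑ i, A i j) - r0 j) 0) ∧
      (∑ j, min (∑ i, Z i j) (r0 j))
        = (∑ j, min (∑ i, A i j) (r0 j)) + ε := by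
  classical
  obtain ⟨ε₀, hε₀, C, hC, H⟩ := reach_perturb L d0f A r0 hA q' hq
  -- the overflow cells form a nonempty finite set
  obtain ⟨Z₁, o₁, ho₁, -, -, -⟩ := H ε₀ hε₀ le_rfl
  set Ofin : Finset (Fin n) := univ.filter (fun o => r0 o < ∑ i, A i o) with hOfin
  have hne : Ofin.Nonempty := ⟨o₁, by rw [hOfin, mem_filter]; exact ⟨mem_univ _, ho₁⟩⟩
  set slack : ℝ := Ofin.inf' hne (fun o => (∑ i, A i o) - r0 o) with hslack
  have hslackpos : 0 < slack := by
    rw [hslack, Finset.lt_inf'_iff]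
    intro o ho
    rw [hOfin, mem_filter] at ho
    linarith [ho.2]
  set ε : ℝ := min ε₀ (min (r0 q' - ∑ i, A i q') slack) with hε
  have hεpos : 0 < ε :=
    lt_min hε₀ (lt_min (by linarith) hslackpos)
  obtain ⟨Z, o, ho, hZfeas, hZcol, -⟩ := H ε hεpos (min_le_left _ _)
  have hεq : ε ≤ r0 q' - ∑ i, A i q' :=
    le_trans (min_le_right _ _) (min_le_left _ _)
  have hεo : ε ≤ (∑ i, A i o) - r0 o := by
    have h1 : ε ≤ slack := le_trans (min_le_right _ _) (min_le_right _ _)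
    have h2 : slack ≤ (∑ i, A i o) - r0 o := by
      rw [hslack]
      exact Finset.inf'_le _ (by rw [hOfin, mem_filter]; exact ⟨mem_univ _, ho⟩)
    linarith
  have hoq : o ≠ q' := by
    intro h
    rw [h] at ho
    linarith
  -- column values
  have hcolq : (∑ i, Z i q') = (∑ i, A i q') + ε := by
    rw [hZcol q', if_pos rfl, if_neg (Ne.symm hoq)]
    ring
  have hcolo : (∑ i, Z i o) = (∑ i, A i o) - ε := by
    rw [hZcol o, if_neg hoq, if_pos rfl]
    ring
  have hcolother : ∀ j, j ≠ q' → j ≠ o → (∑ i, Z i j) = (∑ i, A i j) := by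
    intro j h1 h2
    rw [hZcol j, if_neg h1, if_neg h2]
    ring
  refine ⟨Z, ε, hεpos, hZfeas, ?_, ?_⟩
  · intro j
    rcases eq_or_ne j q' with rfl | h1
    · rw [hcolq]
      have : (∑ i, A i j) + ε - r0 j ≤ 0 := by linarith
      rw [max_eq_right this]
      exact le_max_right _ _
    · rcases eq_or_ne j o with rfl | h2
      · rw [hcolo]
        exact max_le_max (by linarith) le_rfl
      · rw [hcolother j h1 h2]
  · -- value increases by exactly ε
    have : ∀ j, min (∑ i, Z i j) (r0 j) - min (∑ i, A i j) (r0 j)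
        = if j = q' then ε else 0 := by
      intro j
      rcases eq_or_ne j q' with rfl | h1
      · rw [if_pos rfl, hcolq, min_eq_left (by linarith), min_eq_left (by linarith)]
        ring
      · rw [if_neg h1]
        rcases eq_or_ne j o with rfl | h2
        · rw [hcolo, min_eq_right (by linarith), min_eq_right (by linarith)]
          ring
        · rw [hcolother j h1 h2]
          ring
    have hsum : ∑ j, (min (∑ i, Z i j) (r0 j) - min (∑ i, A i j) (r0 j)) = ε := by
      rw [Finset.sum_congr rfl fun j _ => this j]
      simp
    rw [Finset.sum_sub_distrib] at hsum
    linarith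


/-- Conversion of a single-step dispatch into an assignment matrix. -/
noncomputable def yOf {n : ℕ} (d0f : Fin n → ℝ) (x0 : Fin n → Fin n → ℝ) :
    Fin n → Fin n → ℝ :=
  fun i j => x0 i j + if i = j then (d0f i - ∑ k, x0 i k) else 0

lemma yOf_feas {n : ℕ} (L : Fin n → Fin n → ℕ) (d0f : Fin n → ℝ)
    (x0 : Fin n → Fin n → ℝ) (hpos : ∀ i j, 0 ≤ x0 i j)
    (hadj : ∀ i j, L i j = 0 → x0 i j = 0)
    (hout : ∀ i, ∑ j, x0 i j ≤ d0f i) : YFeas L d0f (yOf d0f x0) := by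
  refine ⟨?_, ?_, ?_⟩
  · intro i j
    unfold yOf
    split_ifs with h
    · have := hout i
      have := hpos i j
      linarith
    · have := hpos i j
      linarith
  · intro i j hij hL
    unfold yOf
    rw [if_neg hij, hadj i j hL]
    ring
  · intro i
    unfold yOf
    rw [Finset.sum_add_distrib]
    simp [Finset.sum_ite_eq]

lemma yOf_col {n : ℕ} (d0f : Fin n → ℝ) (x0 : Fin n → Fin n → ℝ) (j : Fin n) :
    ∑ i, yOf d0f x0 i j = postStep d0f x0 j := by
  unfold yOf postStep
  rw [Finset.sum_add_distrib]
  have : ∑ i, (if i = j then (d0f i - ∑ k, x0 i k) else 0)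
      = d0f j - ∑ k, x0 j k := by
    rw [Finset.sum_ite_eq' univ j (fun i => d0f i - ∑ k, x0 i k)]
    simp
  rw [this]
  ring

/-- Time-greedy property: with zero relocation costs, `α > 0`, and
`0 < γ < 1/(α(K-1))` (any `γ > 0` when `K = 1`), an optimal solution of the
scalarized horizon-`K` problem serves, at step 0, the maximum number of
requests achievable at step 0 by any feasible single-step dispatch. -/
theorem time_greedy_property {n : ℕ} (K : ℕ) (hK : 1 ≤ K)
    (L : Fin n → Fin n → ℕ) (d0 : Fin n → ℕ) (r : ℕ → Fin n → ℕ)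
    (γ α : ℝ) (hα : 0 < α) (hγ0 : 0 < γ)
    (hγ : K = 1 ∨ γ < 1 / (α * ((K : ℝ) - 1)))
    (xs : ℕ → Fin n → Fin n → ℝ)
    (hfeas : HorizonFeasible K L (fun i => (d0 i : ℝ))
      (fun k i => (r k i : ℝ)) xs)
    (hopt : ∀ x, HorizonFeasible K L (fun i => (d0 i : ℝ))
        (fun k i => (r k i : ℝ)) x →
      scalarObj K γ α (fun i => (d0 i : ℝ)) (fun k i => (r k i : ℝ)) x ≤
      scalarObj K γ α (fun i => (d0 i : ℝ)) (fun k i => (r k i : ℝ)) xs) :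
    IsGreatest
      {v : ℝ | ∃ x0 : Fin n → Fin n → ℝ,
        (∀ i j, 0 ≤ x0 i j) ∧ (∀ i j, L i j = 0 → x0 i j = 0) ∧
        (∀ i, (∑ j, x0 i j) ≤ (d0 i : ℝ)) ∧
        v = ∑ i, min ((d0 i : ℝ) + (∑ j, x0 j i) - (∑ j, x0 i j)) ((r 0 i : ℝ))}
      (∑ i, gStep (fun i => (d0 i : ℝ)) (xs 0) (fun i => (r 0 i : ℝ)) i) := by
  classical
  have hK0 : 0 < K := hK
  set d0f : Fin n → ℝ := fun i => (d0 i : ℝ) with hd0f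
  set r0f : Fin n → ℝ := fun i => (r 0 i : ℝ) with hr0f
  have hfeas0 := hfeas 0 hK0
  constructor
  · -- membership: xs 0 itself is a feasible single-step dispatch
    refine ⟨xs 0, fun i j => (hfeas0 i).1 j, fun i j h => (hfeas0 i).2.1 j h,
      fun i => (hfeas0 i).2.2, rfl⟩
  · -- upper bound
    rintro v ⟨x0, hpos, hadj, hout, rfl⟩
    set A : Fin n → Fin n → ℝ := yOf d0f (xs 0) with hAdef
    have hA : YFeas L d0f A := yOf_feas L d0f (xs 0)
      (fun i j => (hfeas0 i).1 j) (fun i j h => (hfeas0 i).2.1 j h)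
      (fun i => (hfeas0 i).2.2)
    have hAcol : ∀ j, ∑ i, A i j = postStep d0f (xs 0) j := yOf_col d0f (xs 0)
    set B : Fin n → Fin n → ℝ := yOf d0f x0 with hBdef
    have hB : YFeas L d0f B := yOf_feas L d0f x0
      (fun i j => hpos i j) (fun i j h => hadj i j h) hout
    have hBcol : ∀ j, ∑ i, B i j = postStep d0f x0 j := yOf_col d0f x0
    -- the target quantities as column-sum values
    have hmA : ∑ i, gStep d0f (xs 0) r0f i = ∑ j, min (∑ i, A i j) (r0f j) := by
      apply Finset.sum_congr rfl
      intro j _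
      rw [hAcol j]
      rfl
    have hvB : ∑ i, min (d0f i + (∑ j, x0 j i) - (∑ j, x0 i j)) (r0f i)
        = ∑ j, min (∑ i, B i j) (r0f j) := by
      apply Finset.sum_congr rfl
      intro j _
      rw [hBcol j]
      rfl
    by_cases hreach : ∃ q', Reach L A r0f q' ∧ (∑ i, A i q') < r0f q'
    · -- impossible: a reachable deficit would contradict optimality
      exfalso
      obtain ⟨q', hq', hdf⟩ := hreach
      obtain ⟨Z, ε, hε, hZfeas, hZcap, hZval⟩ := caseB L d0f A r0f hA q' hq' hdf
      obtain ⟨hZpos, hZadj, hZrow⟩ := hZfeas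
      set z0 : Fin n → Fin n → ℝ := fun i j => if i = j then 0 else Z i j with hz0
      have hz0pos : ∀ i j, 0 ≤ z0 i j := by
        intro i j
        rw [hz0]
        dsimp only
        split_ifs
        · exact le_rfl
        · exact hZpos i j
      have hz0adj : ∀ i j, L i j = 0 → z0 i j = 0 := by
        intro i j hL
        rw [hz0]
        dsimp only
        split_ifs with h
        · rfl
        · exact hZadj i j h hL
      have hz0row : ∀ i, ∑ j, z0 i j = d0f i - Z i i := by
        intro i
        have : ∀ j, z0 i j = Z i j - (if i = j then Z i j else 0) := by
          intro j
          rw [hz0]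
          dsimp only
          split_ifs <;> ring
        rw [Finset.sum_congr rfl fun j _ => this j, Finset.sum_sub_distrib,
          Finset.sum_ite_eq univ i (fun j => Z i j)]
        simp [hZrow i]
      have hz0out : ∀ i, ∑ j, z0 i j ≤ d0f i := by
        intro i
        rw [hz0row i]
        have := hZpos i i
        linarith
      have hz0colsum : ∀ j, ∑ i, z0 i j = (∑ i, Z i j) - Z j j := by
        intro j
        have : ∀ i, z0 i j = Z i j - (if i = j then Z i j else 0) := by
          intro i
          rw [hz0]
          dsimp only
          split_ifs <;> ring
        rw [Finset.sum_congr rfl fun i _ => this i, Finset.sum_sub_distrib,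
          Finset.sum_ite_eq' univ j (fun i => Z i j)]
        simp
      have hz0post : ∀ j, postStep d0f z0 j = ∑ i, Z i j := by
        intro j
        unfold postStep
        rw [hz0colsum j, hz0row j]
        ring
      have hcap : ∀ j, max (postStep d0f z0 j - r0f j) 0
          ≤ max (postStep d0f (xs 0) j - r0f j) 0 := by
        intro j
        rw [hz0post j, ← hAcol j]
        exact hZcap j
      have hmaster := master_ineq K hK L d0 r γ α hα hγ0 hγ xs hfeas hopt
        z0 hz0pos hz0adj hz0out hcap
      have hz0g : ∑ i, gStep d0f z0 r0f i = ∑ j, min (∑ i, Z i j) (r0f j) := by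
        apply Finset.sum_congr rfl
        intro j _
        unfold gStep
        rw [hz0post j]
      rw [hz0g, hZval, ← hmA] at hmaster
      linarith
    · -- no reachable deficit: A is value-maximal among all assignments
      push_neg at hreach
      have := caseA L d0f A r0f hA hreach B hB
      rw [hvB, hmA]
      exact this
end
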